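/- arXiv:1308.1264 — 4 statements merged into one kernel-verified Lean document; each statement's English description precedes it below -/
import Mathlib

section
/- Let s ∈ ℕ, γ > 0, ε > 0. Then ∫_{{x ∈ ℝ₊^s : ‖x‖_γ ≥ 1}} ‖x‖_γ^{−s−ε} dx = Γ(1/γ)^s / (ε · γ^{s−1} · Γ(s/γ)), where ‖x‖_γ = (Σ_{k=1}^s |x_k|^γ)^{1/γ}. -/
open MeasureTheory Real Set Pointwise

noncomputable def pnorm {s : ℕ} (γ : ℝ) (x : Fin s → ℝ) : ℝ := (∑ i, |x i| ^ γ) ^ (1 / γ)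

namespace StmtAux

variable {s : ℕ} {γ : ℝ}

lemma sum_nn (γ : ℝ) (x : Fin s → ℝ) : (0:ℝ) ≤ ∑ i, |x i| ^ γ :=
  Finset.sum_nonneg fun _ _ => Real.rpow_nonneg (abs_nonneg _) _

lemma pnorm_nonneg (γ : ℝ) (x : Fin s → ℝ) : 0 ≤ pnorm γ x :=
  Real.rpow_nonneg (sum_nn γ x) _

lemma pnorm_rpow (hγ : 0 < γ) (x : Fin s → ℝ) : pnorm γ x ^ γ = ∑ i, |x i| ^ γ := by
  rw [pnorm, one_div, Real.rpow_inv_rpow (sum_nn γ x) hγ.ne']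

lemma measurable_rpow_const {p : ℝ} (hp : 0 < p) : Measurable fun x : ℝ => x ^ p :=
  (continuous_iff_continuousAt.mpr fun x =>
    Real.continuousAt_rpow_const x p (Or.inr hp.le)).measurable

lemma measurable_pnorm (hγ : 0 < γ) : Measurable (pnorm (s := s) γ) := by
  unfold pnorm
  exact (measurable_rpow_const (by positivity : (0:ℝ) < 1/γ)).comp
    (Finset.measurable_sum _ fun i _ =>
      (measurable_rpow_const hγ).comp ((measurable_pi_apply i).abs))

lemma pnorm_smul (hγ : 0 < γ) {c : ℝ} (hc : 0 ≤ c) (x : Fin s → ℝ) :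
    pnorm γ (c • x) = c * pnorm γ x := by
  have h1 : ∀ i : Fin s, |(c • x) i| ^ γ = c ^ γ * |x i| ^ γ := fun i => by
    simp only [Pi.smul_apply, smul_eq_mul, abs_mul, abs_of_nonneg hc]
    rw [Real.mul_rpow hc (abs_nonneg _)]
  simp only [pnorm, h1, ← Finset.mul_sum]
  rw [Real.mul_rpow (Real.rpow_nonneg hc _) (sum_nn γ x), one_div,
    Real.rpow_rpow_inv hc hγ.ne']

def B (s : ℕ) (γ R : ℝ) : Set (Fin s → ℝ) := {x | (∀ i, 0 < x i) ∧ pnorm γ x < R}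

lemma measurableSet_orth : MeasurableSet {x : Fin s → ℝ | ∀ i, 0 < x i} := by
  have : {x : Fin s → ℝ | ∀ i, 0 < x i} = ⋂ i, (fun x : Fin s → ℝ => x i) ⁻¹' Ioi 0 := by
    ext x; simp [mem_iInter]
  rw [this]
  exact MeasurableSet.iInter fun i => (measurable_pi_apply i) measurableSet_Ioi

lemma measurableSet_B (hγ : 0 < γ) (R : ℝ) : MeasurableSet (B s γ R) := by
  have : B s γ R = {x : Fin s → ℝ | ∀ i, 0 < x i} ∩ (pnorm γ ⁻¹' Iio R) := rfl
  rw [this]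
  exact measurableSet_orth.inter ((measurable_pnorm hγ) measurableSet_Iio)

lemma B_smul (hγ : 0 < γ) {R : ℝ} (hR : 0 < R) : B s γ R = R • B s γ 1 := by
  ext x
  rw [Set.mem_smul_set_iff_inv_smul_mem₀ hR.ne']
  have hR' : (0:ℝ) < R⁻¹ := inv_pos.mpr hR
  simp only [B, mem_setOf_eq, pnorm_smul hγ hR'.le, Pi.smul_apply, smul_eq_mul]
  constructor
  · rintro ⟨h1, h2⟩
    refine ⟨fun i => mul_pos hR' (h1 i), ?_⟩
    have := mul_lt_mul_of_pos_left h2 hR'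
    rwa [inv_mul_cancel₀ hR.ne'] at this
  · rintro ⟨h1, h2⟩
    constructor
    · intro i
      have := mul_pos hR (h1 i)
      rwa [← mul_assoc, mul_inv_cancel₀ hR.ne', one_mul] at this
    · have := mul_lt_mul_of_pos_left h2 hR
      rwa [← mul_assoc, mul_inv_cancel₀ hR.ne', one_mul, mul_one] at this

lemma vol_B (hγ : 0 < γ) {R : ℝ} (hR : 0 < R) :
    volume (B s γ R) = ENNReal.ofReal (R ^ s) * volume (B s γ 1) := by
  rw [B_smul hγ hR, Measure.addHaar_smul, Module.finrank_fin_fun,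
    abs_of_nonneg (pow_nonneg hR.le s)]

lemma vol_B_one_ne_top (hγ : 0 < γ) : volume (B s γ 1) ≠ ⊤ := by
  have hsub : B s γ 1 ⊆ univ.pi fun _ : Fin s => Ioo (0:ℝ) 1 := by
    rintro x ⟨h1, h2⟩
    intro i _
    refine ⟨h1 i, ?_⟩
    by_contra h
    push_neg at h
    have h3 : (1:ℝ) ≤ |x i| ^ γ :=
      Real.one_le_rpow (by rw [abs_of_pos (h1 i)]; exact h) hγ.le
    have h4 : |x i| ^ γ ≤ ∑ j, |x j| ^ γ :=
      Finset.single_le_sum (fun j _ => Real.rpow_nonneg (abs_nonneg _) _) (Finset.mem_univ i)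
    have h5 : (∑ j, |x j| ^ γ) < 1 := by
      have := Real.rpow_lt_one (pnorm_nonneg γ x) h2 hγ
      rwa [pnorm_rpow hγ] at this
    linarith
  refine ne_of_lt (lt_of_le_of_lt (measure_mono hsub) ?_)
  rw [volume_pi_pi]
  simp only [Real.volume_Ioo, sub_zero, ENNReal.ofReal_one, Finset.prod_const_one]
  exact ENNReal.one_lt_top

lemma vol_B_diff (hγ : 0 < γ) {R : ℝ} (hR : 1 ≤ R) :
    volume (B s γ R \ B s γ 1) = ENNReal.ofReal (R ^ s - 1) * volume (B s γ 1) := by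
  have hsub : B s γ 1 ⊆ B s γ R := fun x hx => ⟨hx.1, lt_of_lt_of_le hx.2 hR⟩
  rw [measure_diff hsub (measurableSet_B hγ 1).nullMeasurableSet (vol_B_one_ne_top hγ),
    vol_B hγ (lt_of_lt_of_le one_pos hR), ENNReal.ofReal_sub _ zero_le_one,
    ENNReal.ofReal_one, ENNReal.sub_mul fun _ _ => vol_B_one_ne_top hγ, one_mul]

lemma integrableOn_exp_neg_rpow (hγ : 0 < γ) :
    IntegrableOn (fun y : ℝ => Real.exp (-y ^ γ)) (Ioi 0) := by
  rw [← integrableOn_Ioi_comp_rpow_iff' (fun y : ℝ => Real.exp (-y ^ γ))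
    (inv_ne_zero hγ.ne')]
  refine ((Real.GammaIntegral_convergent (by positivity : (0:ℝ) < γ⁻¹)).congr_fun
    (fun x hx => ?_) measurableSet_Ioi)
  have hx0 : (0:ℝ) ≤ x := (mem_Ioi.mp hx).le
  rw [Real.rpow_inv_rpow hx0 hγ.ne', smul_eq_mul, mul_comm]

lemma exp_image : (fun u : ℝ => Real.exp (-u)) '' Ioi 0 = Ioo 0 1 := by
  ext y
  constructor
  · rintro ⟨u, hu, rfl⟩
    exact ⟨Real.exp_pos _, by
      rw [← Real.exp_zero]
      exact Real.exp_lt_exp.mpr (by simpa using mem_Ioi.mp hu)⟩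
  · rintro ⟨hy0, hy1⟩
    refine ⟨-Real.log y, ?_, by simp [Real.exp_log hy0]⟩
    simpa using Real.log_neg hy0 hy1

lemma exp_deriv : ∀ u ∈ Ioi (0:ℝ),
    HasDerivWithinAt (fun u : ℝ => Real.exp (-u)) (-Real.exp (-u)) (Ioi 0) u := by
  intro u _
  have h : HasDerivAt (fun u : ℝ => Real.exp (-u)) (Real.exp (-u) * (-1)) u :=
    (Real.hasDerivAt_exp (-u)).comp u ((hasDerivAt_id u).neg)
  simpa using h.hasDerivWithinAt

lemma exp_inj : InjOn (fun u : ℝ => Real.exp (-u)) (Ioi 0) := fun a _ b _ hab => by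
  have := Real.exp_injective hab
  exact neg_injective this

lemma neg_log_lintegral (hb : 0 < (b : ℝ)) :
    ∫⁻ t in Ioo (0:ℝ) 1, ENNReal.ofReal ((-Real.log t) ^ b)
      = ENNReal.ofReal (Real.Gamma (b + 1)) := by
  have hGint : IntegrableOn (fun u : ℝ => Real.exp (-u) * u ^ b) (Ioi 0) := by
    refine (Real.GammaIntegral_convergent (by linarith : (0:ℝ) < b + 1)).congr_fun
      (fun x _ => ?_) measurableSet_Ioi
    rw [add_sub_cancel_right]
  have hIntOn : IntegrableOn (fun t : ℝ => (-Real.log t) ^ b) (Ioo 0 1) := by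
    rw [← exp_image,
      integrableOn_image_iff_integrableOn_abs_deriv_smul measurableSet_Ioi exp_deriv exp_inj]
    refine hGint.congr_fun (fun u hu => ?_) measurableSet_Ioi
    rw [abs_neg, abs_of_pos (Real.exp_pos _), Real.log_exp, neg_neg, smul_eq_mul]
  have hval : ∫ t in Ioo (0:ℝ) 1, (-Real.log t) ^ b = Real.Gamma (b + 1) := by
    have h := integral_image_eq_integral_abs_deriv_smul measurableSet_Ioi exp_deriv exp_inj
      (fun t => (-Real.log t) ^ b)
    rw [exp_image] at h
    rw [h, Real.Gamma_eq_integral (by linarith : (0:ℝ) < b + 1)]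
    refine setIntegral_congr_fun measurableSet_Ioi (fun u _ => ?_)
    rw [abs_neg, abs_of_pos (Real.exp_pos _), Real.log_exp, neg_neg, smul_eq_mul,
      add_sub_cancel_right]
  rw [← hval, ← ofReal_integral_eq_lintegral_ofReal hIntOn]
  refine (ae_restrict_iff' measurableSet_Ioo).mpr (ae_of_all _ fun t ht => ?_)
  exact Real.rpow_nonneg (neg_nonneg.mpr (Real.log_nonpos ht.1.le ht.2.le)) _

lemma key_exp (hs : 0 < s) (hγ : 0 < γ) :
    ENNReal.ofReal (Real.Gamma (1/γ + 1) ^ s) =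
      ENNReal.ofReal (Real.Gamma ((s:ℝ)/γ + 1)) * volume (B s γ 1) := by
  classical
  set O : Set (Fin s → ℝ) := {x | ∀ i, 0 < x i} with hO
  have hOm : MeasurableSet O := measurableSet_orth
  set h : ℝ → ℝ := (Ioi 0).indicator (fun y => Real.exp (-|y| ^ γ)) with hh
  have hint : Integrable h := by
    rw [hh, integrable_indicator_iff measurableSet_Ioi]
    exact (integrableOn_exp_neg_rpow hγ).congr_fun
      (fun y hy => by rw [abs_of_pos (mem_Ioi.mp hy)]) measurableSet_Ioi
  have hinth : ∫ y, h y = Real.Gamma (1/γ + 1) := by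
    rw [hh, integral_indicator measurableSet_Ioi, ← integral_exp_neg_rpow hγ]
    exact setIntegral_congr_fun measurableSet_Ioi
      (fun y hy => by rw [abs_of_pos (mem_Ioi.mp hy)])
  have hprod : O.indicator (fun x : Fin s → ℝ => Real.exp (-(∑ i, |x i| ^ γ)))
      = fun x : Fin s → ℝ => ∏ i, h (x i) := by
    funext x
    simp only [hh]
    by_cases hx : ∀ i, 0 < x i
    · rw [Set.indicator_of_mem (show x ∈ O from hx), ← Finset.sum_neg_distrib, Real.exp_sum]
      exact Finset.prod_congr rfl fun i _ =>
        (Set.indicator_of_mem (mem_Ioi.mpr (hx i)) (fun y => Real.exp (-|y| ^ γ))).symm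
    · rw [Set.indicator_of_notMem (show x ∉ O from hx)]
      push_neg at hx
      obtain ⟨i, hi⟩ := hx
      exact (Finset.prod_eq_zero (Finset.mem_univ i)
        (Set.indicator_of_notMem
          (fun h => absurd (mem_Ioi.mp h) (not_lt.mpr hi))
          (fun y => Real.exp (-|y| ^ γ)))).symm
  have hFint : Integrable (fun x : Fin s → ℝ => ∏ i, h (x i)) :=
    Integrable.fintype_prod (fun _ => hint)
  have hvalF : ∫ x : Fin s → ℝ, ∏ i, h (x i) = Real.Gamma (1/γ + 1) ^ s := by
    rw [volume_pi, MeasureTheory.integral_fintype_prod_eq_pow h, hinth, Fintype.card_fin]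
  -- the function of interest
  set f2 : (Fin s → ℝ) → ℝ := fun x => Real.exp (-(pnorm γ x ^ γ)) with hf2
  have hf2eq : ∀ x, f2 x = Real.exp (-(∑ i, |x i| ^ γ)) := fun x => by
    show Real.exp (-(pnorm γ x ^ γ)) = _
    rw [pnorm_rpow hγ]
  have hf2m : Measurable f2 := by
    refine (Real.measurable_exp.comp ?_)
    exact ((measurable_rpow_const hγ).comp (measurable_pnorm hγ)).neg
  -- LHS
  have hIntOn2 : IntegrableOn f2 O := by
    rw [← integrable_indicator_iff hOm]
    have : O.indicator f2 = fun x : Fin s → ℝ => ∏ i, h (x i) := by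
      rw [← hprod]; funext x; simp only [Set.indicator]; split <;> simp [hf2eq]
    rw [this]; exact hFint
  have hLHS : ∫⁻ x in O, ENNReal.ofReal (f2 x) = ENNReal.ofReal (Real.Gamma (1/γ + 1) ^ s) := by
    rw [← ofReal_integral_eq_lintegral_ofReal hIntOn2
      (ae_of_all _ fun x => Real.exp_nonneg _)]
    congr 1
    rw [← hvalF, ← MeasureTheory.integral_indicator hOm]
    congr 1
    rw [← hprod]
    funext x; simp only [Set.indicator]; split <;> simp [hf2eq]
  -- layer cake
  have hlayer : ∫⁻ x in O, ENNReal.ofReal (f2 x)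
      = ∫⁻ t in Ioi (0:ℝ), (volume.restrict O) {a | t < f2 a} :=
    lintegral_eq_lintegral_meas_lt _ (ae_of_all _ fun x => Real.exp_nonneg _)
      hf2m.aemeasurable
  have hmeas_t : ∀ t ∈ Ioi (0:ℝ), (volume.restrict O) {a | t < f2 a}
      = (Ioo (0:ℝ) 1).indicator
          (fun t => ENNReal.ofReal ((-Real.log t) ^ ((s:ℝ)/γ))) t * volume (B s γ 1) := by
    intro t ht
    have ht0 : (0:ℝ) < t := mem_Ioi.mp ht
    rw [Measure.restrict_apply (measurableSet_lt measurable_const hf2m)]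
    by_cases ht1 : t < 1
    · have hu : (0:ℝ) < -Real.log t := neg_pos.mpr (Real.log_neg ht0 ht1)
      have hset : {a | t < f2 a} ∩ O = B s γ ((-Real.log t) ^ γ⁻¹) := by
        ext x
        simp only [mem_inter_iff, mem_setOf_eq, B, hO]
        constructor
        · rintro ⟨hlt, hpos⟩
          refine ⟨hpos, ?_⟩
          have hlt' : t < Real.exp (-(pnorm γ x ^ γ)) := hlt
          have h1 : Real.log t < -(pnorm γ x ^ γ) := by
            have := Real.log_lt_log ht0 hlt'
            rwa [Real.log_exp] at this
          have h2 : pnorm γ x ^ γ < -Real.log t := by linarith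
          have := Real.rpow_lt_rpow (Real.rpow_nonneg (pnorm_nonneg γ x) γ) h2
            (by positivity : (0:ℝ) < γ⁻¹)
          rwa [Real.rpow_rpow_inv (pnorm_nonneg γ x) hγ.ne'] at this
        · rintro ⟨hpos, hlt⟩
          refine ⟨?_, hpos⟩
          show t < Real.exp (-(pnorm γ x ^ γ))
          have := Real.rpow_lt_rpow (pnorm_nonneg γ x) hlt hγ
          rw [Real.rpow_inv_rpow hu.le hγ.ne'] at this
          calc t = Real.exp (Real.log t) := (Real.exp_log ht0).symm
            _ < Real.exp (-(pnorm γ x ^ γ)) := Real.exp_lt_exp.mpr (by linarith)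
      rw [hset, vol_B hγ (Real.rpow_pos_of_pos hu _),
        Set.indicator_of_mem (Set.mem_Ioo.mpr ⟨ht0, ht1⟩)]
      congr 2
      rw [← Real.rpow_natCast ((-Real.log t) ^ γ⁻¹) s, ← Real.rpow_mul hu.le,
        inv_mul_eq_div]
    · have hset : {a | t < f2 a} ∩ O = ∅ := by
        ext x
        simp only [mem_inter_iff, mem_setOf_eq, mem_empty_iff_false, iff_false, not_and]
        intro hlt
        exfalso
        have h1 : f2 x ≤ 1 := by
          rw [hf2, Real.exp_le_one_iff]
          exact neg_nonpos.mpr (Real.rpow_nonneg (pnorm_nonneg γ x) γ)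
        push_neg at ht1
        linarith
      rw [hset, measure_empty, Set.indicator_of_notMem (fun hmem => ht1 hmem.2), zero_mul]
  rw [hlayer, setLIntegral_congr_fun measurableSet_Ioi hmeas_t] at hLHS
  rw [← hLHS]
  have hm : Measurable fun t : ℝ => (Ioo (0:ℝ) 1).indicator
      (fun t => ENNReal.ofReal ((-Real.log t) ^ ((s:ℝ)/γ))) t :=
    Measurable.indicator ((measurable_rpow_const (by positivity : (0:ℝ) < (s:ℝ)/γ)).comp
      Real.measurable_log.neg).ennreal_ofReal measurableSet_Ioo
  rw [lintegral_mul_const _ hm, lintegral_indicator measurableSet_Ioo,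
    Measure.restrict_restrict measurableSet_Ioo,
    Set.inter_eq_self_of_subset_left Ioo_subset_Ioi_self,
    neg_log_lintegral (by positivity : (0:ℝ) < (s:ℝ)/γ)]

lemma L1_lintegral {d : ℝ} (hd0 : 0 < d) (hd1 : d < 1) :
    ∫⁻ t in Ioo (0:ℝ) 1, ENNReal.ofReal ((t ^ d)⁻¹ - 1)
      = ENNReal.ofReal (1/(1-d) - 1) := by
  have hcong : ∀ t ∈ Ioo (0:ℝ) 1,
      ENNReal.ofReal ((t ^ d)⁻¹ - 1) = ENNReal.ofReal (t ^ (-d) - 1) := fun t ht => by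
    rw [Real.rpow_neg ht.1.le]
  rw [setLIntegral_congr_fun measurableSet_Ioo hcong]
  have hii : IntervalIntegrable (fun t : ℝ => t ^ (-d)) volume 0 1 :=
    intervalIntegral.intervalIntegrable_rpow' (by linarith)
  have hIoc : IntegrableOn (fun t : ℝ => t ^ (-d)) (Ioc 0 1) :=
    (intervalIntegrable_iff_integrableOn_Ioc_of_le zero_le_one).mp hii
  have hIoo : IntegrableOn (fun t : ℝ => t ^ (-d) - 1) (Ioo 0 1) := by
    refine (hIoc.mono_set Ioo_subset_Ioc_self).sub ?_
    refine integrableOn_const ?_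
    rw [Real.volume_Ioo]
    exact ENNReal.ofReal_ne_top
  have hnn : ∀ t ∈ Ioo (0:ℝ) 1, 0 ≤ t ^ (-d) - 1 := fun t ht => by
    have h1 : (1:ℝ) ≤ t ^ (-d) :=
      Real.one_le_rpow_of_pos_of_le_one_of_nonpos ht.1 ht.2.le (by linarith)
    linarith
  rw [← ofReal_integral_eq_lintegral_ofReal hIoo
    ((ae_restrict_iff' measurableSet_Ioo).mpr (ae_of_all _ hnn))]
  congr 1
  rw [← integral_Ioc_eq_integral_Ioo, ← intervalIntegral.integral_of_le zero_le_one,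
    intervalIntegral.integral_sub hii intervalIntegrable_const,
    integral_rpow (Or.inl (by linarith : (-1:ℝ) < -d)),
    intervalIntegral.integral_const]
  have h1 : -d + 1 ≠ 0 := by linarith
  have h2 : (1:ℝ) - d ≠ 0 := by linarith
  rw [Real.one_rpow, Real.zero_rpow h1]
  field_simp
  ring_nf

end StmtAux

open StmtAux in
theorem stmt_6 (s : ℕ) (hs : 0 < s) (γ ε : ℝ) (hγ : 0 < γ) (hε : 0 < ε) :
    ∫⁻ x in {x : Fin s → ℝ | (∀ i, 0 < x i) ∧ 1 ≤ pnorm γ x},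
        ENNReal.ofReal (pnorm γ x ^ (-(s : ℝ) - ε)) =
      ENNReal.ofReal (Real.Gamma (1 / γ) ^ s / (ε * γ ^ (s - 1) * Real.Gamma (s / γ))) := by
  classical
  set c : ℝ := -(s:ℝ) - ε with hc
  set q : ℝ := (s:ℝ) + ε with hq
  have hq0 : 0 < q := by positivity
  have hcq : c = -q := by rw [hc, hq]; ring
  set d : ℝ := (s:ℝ)/q with hd
  have hd0 : 0 < d := by positivity
  have hd1 : d < 1 := by
    rw [hd, div_lt_one hq0, hq]
    linarith
  set A : Set (Fin s → ℝ) := {x | (∀ i, 0 < x i) ∧ 1 ≤ pnorm γ x} with hA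
  have hfm : Measurable (fun x : Fin s → ℝ => pnorm γ x ^ c) := by
    have heq : (fun x : Fin s → ℝ => pnorm γ x ^ c) = fun x => (pnorm γ x ^ q)⁻¹ := by
      funext x
      rw [hcq, Real.rpow_neg (pnorm_nonneg γ x)]
    rw [heq]
    exact ((measurable_rpow_const hq0).comp (measurable_pnorm hγ)).inv
  have hlayer := lintegral_eq_lintegral_meas_lt (volume.restrict A)
    (ae_of_all _ fun x => Real.rpow_nonneg (pnorm_nonneg γ x) c) hfm.aemeasurable
  beta_reduce at hlayer
  rw [hlayer]
  have hmeas_t : ∀ t ∈ Ioi (0:ℝ), (volume.restrict A) {a | t < pnorm γ a ^ c}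
      = (Ioo (0:ℝ) 1).indicator (fun t => ENNReal.ofReal ((t ^ d)⁻¹ - 1)) t
          * volume (B s γ 1) := by
    intro t ht
    have ht0 : (0:ℝ) < t := ht
    have hAm : MeasurableSet A := by
      have : A = {x : Fin s → ℝ | ∀ i, 0 < x i} ∩ (pnorm γ ⁻¹' Ici 1) := rfl
      rw [this]
      exact measurableSet_orth.inter ((measurable_pnorm hγ) measurableSet_Ici)
    rw [Measure.restrict_apply (measurableSet_lt measurable_const hfm)]
    by_cases ht1 : t < 1
    · set R : ℝ := t ^ (-q⁻¹) with hR
      have hR1 : 1 ≤ R :=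
        Real.one_le_rpow_of_pos_of_le_one_of_nonpos ht0 ht1.le
          (neg_nonpos.mpr (inv_pos.mpr hq0).le)
      have hset : {a | t < pnorm γ a ^ c} ∩ A = B s γ R \ B s γ 1 := by
        ext x
        simp only [mem_inter_iff, mem_setOf_eq, B, mem_diff, hA]
        constructor
        · rintro ⟨hlt, hpos, hge⟩
          have hp0 : 0 < pnorm γ x := lt_of_lt_of_le one_pos hge
          refine ⟨⟨hpos, ?_⟩, fun hcon => absurd hcon.2 (not_lt.mpr hge)⟩
          rw [hcq, Real.rpow_neg (pnorm_nonneg γ x)] at hlt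
          have h2 : pnorm γ x ^ q < t⁻¹ :=
            (lt_inv_comm₀ ht0 (Real.rpow_pos_of_pos hp0 q)).mp hlt
          have h3 := Real.rpow_lt_rpow (Real.rpow_nonneg (pnorm_nonneg γ x) q) h2
            (inv_pos.mpr hq0)
          rwa [Real.rpow_rpow_inv (pnorm_nonneg γ x) hq0.ne', Real.inv_rpow ht0.le,
            ← Real.rpow_neg ht0.le] at h3
        · rintro ⟨⟨hpos, hPR⟩, hnot⟩
          have hge : 1 ≤ pnorm γ x := by
            by_contra hcon
            exact hnot ⟨hpos, not_le.mp hcon⟩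
          refine ⟨?_, hpos, hge⟩
          have hp0 : 0 < pnorm γ x := lt_of_lt_of_le one_pos hge
          have h2 := Real.rpow_lt_rpow (pnorm_nonneg γ x) hPR hq0
          rw [← Real.rpow_mul ht0.le, neg_mul, inv_mul_cancel₀ hq0.ne',
            Real.rpow_neg_one] at h2
          have h3 := (lt_inv_comm₀ (Real.rpow_pos_of_pos hp0 q) ht0).mp h2
          rwa [hcq, Real.rpow_neg (pnorm_nonneg γ x)]
      rw [hset, vol_B_diff hγ hR1, Set.indicator_of_mem (Set.mem_Ioo.mpr ⟨ht0, ht1⟩)]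
      congr 2
      rw [hR, ← Real.rpow_natCast (t ^ (-q⁻¹)) s, ← Real.rpow_mul ht0.le,
        ← Real.rpow_neg ht0.le]
      congr 1
      rw [hd]
      ring
    · have hset : {a | t < pnorm γ a ^ c} ∩ A = ∅ := by
        ext x
        simp only [mem_inter_iff, mem_setOf_eq, mem_empty_iff_false, iff_false, not_and, hA]
        intro hlt hpos hge
        have h1 : pnorm γ x ^ c ≤ 1 :=
          Real.rpow_le_one_of_one_le_of_nonpos hge (by rw [hcq]; linarith)
        push_neg at ht1
        linarith
      rw [hset, measure_empty,
        Set.indicator_of_notMem (fun hmem => ht1 hmem.2), zero_mul]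
  rw [setLIntegral_congr_fun measurableSet_Ioi hmeas_t]
  have hm : Measurable (fun t : ℝ => (Ioo (0:ℝ) 1).indicator
      (fun t => ENNReal.ofReal ((t ^ d)⁻¹ - 1)) t) :=
    Measurable.indicator
      ((((measurable_rpow_const hd0).inv).sub measurable_const).ennreal_ofReal)
      measurableSet_Ioo
  rw [lintegral_mul_const _ hm, lintegral_indicator measurableSet_Ioo,
    Measure.restrict_restrict measurableSet_Ioo,
    Set.inter_eq_self_of_subset_left Ioo_subset_Ioi_self,
    L1_lintegral hd0 hd1]
  -- identify the volume
  have hΓpos : 0 < Real.Gamma ((s:ℝ)/γ + 1) := Real.Gamma_pos_of_pos (by positivity)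
  have hV : volume (B s γ 1)
      = ENNReal.ofReal (Real.Gamma (1/γ + 1) ^ s / Real.Gamma ((s:ℝ)/γ + 1)) := by
    have h1 : volume (B s γ 1) = ENNReal.ofReal (Real.Gamma (1/γ + 1) ^ s)
        / ENNReal.ofReal (Real.Gamma ((s:ℝ)/γ + 1)) := by
      rw [ENNReal.eq_div_iff ((ENNReal.ofReal_pos.mpr hΓpos).ne') ENNReal.ofReal_ne_top]
      exact (key_exp hs hγ).symm
    rw [h1, ENNReal.ofReal_div_of_pos hΓpos]
  rw [hV]
  have h1d : 1/(1-d) - 1 = (s:ℝ)/ε := by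
    rw [hd, hq]
    have hne : (s:ℝ) + ε ≠ 0 := by positivity
    field_simp
    rw [add_sub_cancel_left, div_sub_one hε.ne', add_sub_cancel_right, mul_div_assoc',
      mul_div_cancel_left₀ _ hε.ne']
  rw [h1d, ← ENNReal.ofReal_mul (by positivity : (0:ℝ) ≤ (s:ℝ)/ε)]
  congr 1
  obtain ⟨m, rfl⟩ : ∃ m, s = m + 1 := ⟨s - 1, (Nat.succ_pred_eq_of_pos hs).symm⟩
  have hΓs : Real.Gamma ((↑(m+1))/γ + 1) = ((↑(m+1))/γ) * Real.Gamma ((↑(m+1))/γ) :=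
    Real.Gamma_add_one (by positivity)
  have hΓ1 : Real.Gamma (1/γ + 1) = (1/γ) * Real.Gamma (1/γ) :=
    Real.Gamma_add_one (one_div_ne_zero hγ.ne')
  have hΓspos : 0 < Real.Gamma ((↑(m+1) : ℝ)/γ) := Real.Gamma_pos_of_pos (by positivity)
  have hsne : ((m:ℝ) + 1) ≠ 0 := by positivity
  rw [hΓs, hΓ1, mul_pow, Nat.add_sub_cancel]
  field_simp [hγ.ne', hε.ne', hΓspos.ne', hsne]
  ring_nf
  rw [mul_assoc γ, mul_comm (γ ^ m), ← mul_assoc, mul_inv_cancel₀ hγ.ne', one_mul, ← mul_pow,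
    mul_inv_cancel₀ hγ.ne', one_pow]
end

section
/- Let m, n ∈ ℕ, α, β > 0, σ > 1. For every y ∈ ℝ₊^n, the weight function ω(σ, y) := ‖y‖_β^{−σ} ∫_{ℝ₊^m} (coth(‖x‖_α/‖y‖_β) − 1) ‖x‖_α^{σ−m} dx equals the constant K₂(σ) := (Γ(1/α)^m/(α^{m−1} Γ(m/α))) · (Γ(σ)/2^{σ−1}) · ζ(σ); in particular it is independent of y. -/
open MeasureTheory Real Set

noncomputable def cothR (v : ℝ) : ℝ := (Real.exp v + Real.exp (-v)) / (Real.exp v - Real.exp (-v))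
noncomputable def zetaR (σ : ℝ) : ℝ := ∑' k : ℕ+, (k : ℝ) ^ (-σ)
open scoped ENNReal Pointwise

section aux

variable {m : ℕ} {α : ℝ}

lemma sum_abs_rpow_nonneg (γ : ℝ) (x : Fin m → ℝ) : 0 ≤ ∑ i, |x i| ^ γ :=
  Finset.sum_nonneg fun _ _ => rpow_nonneg (abs_nonneg _) _

lemma pnorm_nonneg (γ : ℝ) (x : Fin m → ℝ) : 0 ≤ pnorm γ x :=
  rpow_nonneg (sum_abs_rpow_nonneg _ _) _

lemma pnorm_pos (hm : 0 < m) {x : Fin m → ℝ} (hx : ∀ i, 0 < x i) : 0 < pnorm α x := by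
  have h : 0 < ∑ i, |x i| ^ α :=
    Finset.sum_pos (fun i _ => rpow_pos_of_pos (abs_pos.mpr (hx i).ne') _)
      ⟨⟨0, hm⟩, Finset.mem_univ _⟩
  exact rpow_pos_of_pos h _

lemma pnorm_rpow_self (hα : 0 < α) (x : Fin m → ℝ) : pnorm α x ^ α = ∑ i, |x i| ^ α := by
  rw [pnorm, ← rpow_mul (sum_abs_rpow_nonneg _ _), one_div, inv_mul_cancel₀ hα.ne', rpow_one]

lemma pnorm_smul (hα : 0 < α) {r : ℝ} (hr : 0 ≤ r) (x : Fin m → ℝ) :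
    pnorm α (r • x) = r * pnorm α x := by
  simp only [pnorm, Pi.smul_apply, smul_eq_mul]
  have h : ∀ i : Fin m, |r * x i| ^ α = r ^ α * |x i| ^ α := fun i => by
    rw [abs_mul, mul_rpow (abs_nonneg _) (abs_nonneg _), abs_of_nonneg hr]
  simp_rw [h, ← Finset.mul_sum]
  rw [mul_rpow (rpow_nonneg hr _) (sum_abs_rpow_nonneg _ _), ← rpow_mul hr, mul_one_div,
    div_self hα.ne', rpow_one]

lemma continuous_pnorm (hα : 0 < α) : Continuous (pnorm α : (Fin m → ℝ) → ℝ) := by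
  apply Continuous.rpow_const
  · exact continuous_finset_sum _ fun i _ =>
      ((continuous_abs.comp (continuous_apply i)).rpow_const fun x => Or.inr hα.le)
  · exact fun x => Or.inr (by positivity)

lemma measurable_pnorm (hα : 0 < α) : Measurable (pnorm α : (Fin m → ℝ) → ℝ) :=
  (continuous_pnorm hα).measurable

lemma measurableSet_posOrt (m : ℕ) : MeasurableSet {x : Fin m → ℝ | ∀ i, 0 < x i} := by
  have h : {x : Fin m → ℝ | ∀ i, 0 < x i} = Set.univ.pi (fun _ => Ioi (0:ℝ)) := by ext x; simp
  rw [h]; exact MeasurableSet.univ_pi fun _ => measurableSet_Ioi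

lemma orth_ball_smul (hα : 0 < α) {r : ℝ} (hr : 0 < r) :
    {x : Fin m → ℝ | (∀ i, 0 < x i) ∧ pnorm α x ≤ r} =
      r • {x : Fin m → ℝ | (∀ i, 0 < x i) ∧ pnorm α x ≤ 1} := by
  ext x
  rw [Set.mem_smul_set_iff_inv_smul_mem₀ hr.ne']
  simp only [mem_setOf_eq, Pi.smul_apply, smul_eq_mul]
  rw [pnorm_smul hα (inv_nonneg.mpr hr.le)]
  constructor
  · rintro ⟨h1, h2⟩
    refine ⟨fun i => mul_pos (inv_pos.mpr hr) (h1 i), ?_⟩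
    have := mul_le_mul_of_nonneg_left h2 (inv_nonneg.mpr hr.le)
    simpa [inv_mul_cancel₀ hr.ne'] using this
  · rintro ⟨h1, h2⟩
    refine ⟨fun i => ?_, ?_⟩
    · have := mul_pos hr (h1 i)
      rwa [← mul_assoc, mul_inv_cancel₀ hr.ne', one_mul] at this
    · have := mul_le_mul_of_nonneg_left h2 hr.le
      rwa [← mul_assoc, mul_inv_cancel₀ hr.ne', one_mul, mul_one] at this

lemma measurableSet_orth_ball (hα : 0 < α) (r : ℝ) :
    MeasurableSet {x : Fin m → ℝ | (∀ i, 0 < x i) ∧ pnorm α x ≤ r} := by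
  have h : {x : Fin m → ℝ | (∀ i, 0 < x i) ∧ pnorm α x ≤ r} =
      {x : Fin m → ℝ | ∀ i, 0 < x i} ∩ (pnorm α ⁻¹' Iic r) := rfl
  rw [h]
  exact (measurableSet_posOrt m).inter ((measurable_pnorm hα) measurableSet_Iic)

lemma volume_orth_ball_smul (hα : 0 < α) {r : ℝ} (hr : 0 < r) :
    volume {x : Fin m → ℝ | (∀ i, 0 < x i) ∧ pnorm α x ≤ r} =
      ENNReal.ofReal (r ^ m) * volume {x : Fin m → ℝ | (∀ i, 0 < x i) ∧ pnorm α x ≤ 1} := by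
  rw [orth_ball_smul hα hr, Measure.addHaar_smul, Module.finrank_pi, Fintype.card_fin,
    abs_of_nonneg (by positivity)]

lemma volume_orth_ball_one_ne_top (hα : 0 < α) :
    volume {x : Fin m → ℝ | (∀ i, 0 < x i) ∧ pnorm α x ≤ 1} ≠ ⊤ := by
  have hsub : {x : Fin m → ℝ | (∀ i, 0 < x i) ∧ pnorm α x ≤ 1} ⊆
      Set.univ.pi (fun _ : Fin m => Icc (0:ℝ) 1) := by
    intro x ⟨h1, h2⟩ i _
    have hs : ∑ j, |x j| ^ α ≤ 1 := by
      have := rpow_le_one (pnorm_nonneg α x) h2 hα.le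
      rwa [pnorm_rpow_self hα] at this
    have hxi : |x i| ^ α ≤ 1 :=
      le_trans (Finset.single_le_sum (fun j _ => rpow_nonneg (abs_nonneg (x j)) α)
        (Finset.mem_univ i)) hs
    have : |x i| ≤ 1 := by
      by_contra hc
      push_neg at hc
      have := Real.one_lt_rpow_iff_of_pos (abs_pos.mpr (h1 i).ne') (y := α)
      exact absurd hxi (not_le.mpr ((this.mpr (Or.inl ⟨hc, hα⟩))))
    exact ⟨(h1 i).le, (abs_le.mp this).2⟩
  refine ne_top_of_le_ne_top ?_ (measure_mono hsub)
  rw [volume_pi_pi]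
  simp [Real.volume_Icc]

end aux

section pushforward

variable {m : ℕ} {α : ℝ}

lemma volume_orth_ball_eq (hα : 0 < α) (hm : 0 < m) (r : ℝ) :
    volume {x : Fin m → ℝ | (∀ i, 0 < x i) ∧ pnorm α x ≤ r} =
      ENNReal.ofReal r ^ m *
        volume {x : Fin m → ℝ | (∀ i, 0 < x i) ∧ pnorm α x ≤ 1} := by
  rcases le_or_gt r 0 with hr | hr
  · have he : {x : Fin m → ℝ | (∀ i, 0 < x i) ∧ pnorm α x ≤ r} = ∅ := by
      ext x
      simp only [mem_setOf_eq, mem_empty_iff_false, iff_false, not_and]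
      intro h1 h2
      exact absurd (le_trans h2 hr) (not_le.mpr (pnorm_pos hm h1))
    rw [he, ENNReal.ofReal_eq_zero.mpr hr, zero_pow hm.ne', zero_mul, measure_empty]
  · rw [volume_orth_ball_smul hα hr, ENNReal.ofReal_pow hr.le]

lemma volume_orth_ball_ne_top (hα : 0 < α) (hm : 0 < m) (r : ℝ) :
    volume {x : Fin m → ℝ | (∀ i, 0 < x i) ∧ pnorm α x ≤ r} ≠ ⊤ := by
  rw [volume_orth_ball_eq hα hm r]
  exact ENNReal.mul_ne_top (ENNReal.pow_ne_top ENNReal.ofReal_ne_top)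
    (volume_orth_ball_one_ne_top hα)

lemma map_pnorm_Ioc (hα : 0 < α) (hm : 0 < m) {a b : ℝ} (hab : a ≤ b) :
    Measure.map (pnorm α) (volume.restrict {x : Fin m → ℝ | ∀ i, 0 < x i}) (Ioc a b) =
      ENNReal.ofReal b ^ m * volume {x : Fin m → ℝ | (∀ i, 0 < x i) ∧ pnorm α x ≤ 1} -
        ENNReal.ofReal a ^ m * volume {x : Fin m → ℝ | (∀ i, 0 < x i) ∧ pnorm α x ≤ 1} := by
  rw [Measure.map_apply (measurable_pnorm hα) measurableSet_Ioc,
    Measure.restrict_apply ((measurable_pnorm hα) measurableSet_Ioc)]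
  have hset : (pnorm α : (Fin m → ℝ) → ℝ) ⁻¹' (Ioc a b) ∩ {x | ∀ i, 0 < x i} =
      {x : Fin m → ℝ | (∀ i, 0 < x i) ∧ pnorm α x ≤ b} \
        {x : Fin m → ℝ | (∀ i, 0 < x i) ∧ pnorm α x ≤ a} := by
    ext x
    simp only [mem_inter_iff, mem_preimage, mem_Ioc, mem_diff, mem_setOf_eq]
    constructor
    · rintro ⟨⟨h1, h2⟩, h3⟩
      exact ⟨⟨h3, h2⟩, fun hc => absurd hc.2 (not_le.mpr h1)⟩
    · rintro ⟨⟨h3, h2⟩, h4⟩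
      refine ⟨⟨?_, h2⟩, h3⟩
      by_contra hc
      exact h4 ⟨h3, not_lt.mp hc⟩
  have hsub : {x : Fin m → ℝ | (∀ i, 0 < x i) ∧ pnorm α x ≤ a} ⊆
      {x : Fin m → ℝ | (∀ i, 0 < x i) ∧ pnorm α x ≤ b} :=
    fun x hx => ⟨hx.1, le_trans hx.2 hab⟩
  rw [hset, measure_diff hsub ((measurableSet_orth_ball hα a).nullMeasurableSet)
      (volume_orth_ball_ne_top hα hm a),
    volume_orth_ball_eq hα hm b, volume_orth_ball_eq hα hm a]

lemma map_pnorm_eq (hα : 0 < α) (hm : 0 < m) :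
    Measure.map (pnorm α) (volume.restrict {x : Fin m → ℝ | ∀ i, 0 < x i}) =
      volume.withDensity ((Ioi (0:ℝ)).indicator fun r =>
        volume {x : Fin m → ℝ | (∀ i, 0 < x i) ∧ pnorm α x ≤ 1} * m *
          ENNReal.ofReal (r ^ (m - 1))) := by
  have hV₁ : volume {x : Fin m → ℝ | (∀ i, 0 < x i) ∧ pnorm α x ≤ 1} ≠ ⊤ :=
    volume_orth_ball_one_ne_top hα
  refine Measure.ext_of_Ioc' _ _ (fun a b hab => ?_) (fun a b hab => ?_)
  · rw [map_pnorm_Ioc hα hm hab.le]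
    exact fun hc => (ENNReal.mul_ne_top (ENNReal.pow_ne_top ENNReal.ofReal_ne_top) hV₁)
      ((ENNReal.sub_eq_top_iff.mp hc).1)
  · rw [map_pnorm_Ioc hα hm hab.le, withDensity_apply _ measurableSet_Ioc]
    rw [show (Ioc a b) = (Ioc a b : Set ℝ) from rfl]
    rw [lintegral_indicator measurableSet_Ioi, Measure.restrict_restrict measurableSet_Ioi]
    have hIoc : Ioi (0:ℝ) ∩ Ioc a b = Ioc (max a 0) b := by
      ext t
      simp only [mem_inter_iff, mem_Ioi, mem_Ioc, max_lt_iff]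
      tauto
    rw [hIoc]
    rcases le_or_gt b 0 with hb | hb
    · have h1 : Ioc (max a 0) b = (∅ : Set ℝ) :=
        Ioc_eq_empty (fun hc => absurd (lt_of_le_of_lt (le_max_right a 0) hc)
          (not_lt.mpr hb))
      rw [h1, Measure.restrict_empty, lintegral_zero_measure,
        ENNReal.ofReal_eq_zero.mpr hb, zero_pow hm.ne', zero_mul, zero_tsub]
    · have ha' : (0:ℝ) ≤ max a 0 := le_max_right a 0
      have hab' : max a 0 ≤ b := max_le hab.le hb.le
      have hofa : ENNReal.ofReal a = ENNReal.ofReal (max a 0) := by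
        rcases le_total a 0 with h | h
        · rw [ENNReal.ofReal_eq_zero.mpr h, max_eq_right h, ENNReal.ofReal_zero]
        · rw [max_eq_left h]
      -- compute the lintegral
      have hint : IntegrableOn (fun r : ℝ => r ^ (m - 1)) (Ioc (max a 0) b) :=
        (continuous_pow (m - 1)).integrableOn_Ioc
      have hlin : ∫⁻ r in Ioc (max a 0) b,
          volume {x : Fin m → ℝ | (∀ i, 0 < x i) ∧ pnorm α x ≤ 1} * m *
            ENNReal.ofReal (r ^ (m - 1)) =
          volume {x : Fin m → ℝ | (∀ i, 0 < x i) ∧ pnorm α x ≤ 1} * m *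
            ENNReal.ofReal ((b ^ m - max a 0 ^ m) / m) := by
        rw [lintegral_const_mul _ (by measurability)]
        congr 1
        rw [← ofReal_integral_eq_lintegral_ofReal hint ?_]
        · congr 1
          rw [← intervalIntegral.integral_of_le hab', integral_pow, Nat.sub_add_cancel hm]
          have hc : ((m - 1 : ℕ) : ℝ) + 1 = m := by
            rw [Nat.cast_sub hm]; ring
          rw [hc]
        · filter_upwards [ae_restrict_mem measurableSet_Ioc] with t ht
          have : (0:ℝ) < t := lt_of_le_of_lt ha' ht.1
          positivity
      rw [hlin]
      have hbm : max a 0 ^ m ≤ b ^ m := pow_le_pow_left₀ ha' hab' m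
      have hmR : (0:ℝ) < m := Nat.cast_pos.mpr hm
      have hend : volume {x : Fin m → ℝ | (∀ i, 0 < x i) ∧ pnorm α x ≤ 1} * m *
          ENNReal.ofReal ((b ^ m - max a 0 ^ m) / m) =
          volume {x : Fin m → ℝ | (∀ i, 0 < x i) ∧ pnorm α x ≤ 1} *
            ENNReal.ofReal (b ^ m - max a 0 ^ m) := by
        rw [mul_assoc]
        congr 1
        rw [show ((m : ℝ≥0∞)) = ENNReal.ofReal (m : ℝ) by simp,
          ← ENNReal.ofReal_mul (by positivity), mul_div_cancel₀ _ hmR.ne']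
      rw [hend, hofa, ← ENNReal.ofReal_pow ha', ← ENNReal.ofReal_pow hb.le,
        ← ENNReal.sub_mul (fun _ _ => hV₁),
        ← ENNReal.ofReal_sub _ (by positivity), mul_comm]

end pushforward

section polar

variable {m : ℕ} {α : ℝ}

lemma measurable_rpow_const (c : ℝ) : Measurable fun r : ℝ => r ^ c := by measurability

lemma lintegral_pnorm_polar (hα : 0 < α) (hm : 0 < m) {g : ℝ → ℝ≥0∞} (hg : Measurable g) :
    ∫⁻ x in {x : Fin m → ℝ | ∀ i, 0 < x i}, g (pnorm α x) =
      ∫⁻ r in Ioi (0:ℝ),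
        volume {x : Fin m → ℝ | (∀ i, 0 < x i) ∧ pnorm α x ≤ 1} * m *
          ENNReal.ofReal (r ^ (m - 1)) * g r := by
  have hdens : Measurable ((Ioi (0:ℝ)).indicator fun r =>
      volume {x : Fin m → ℝ | (∀ i, 0 < x i) ∧ pnorm α x ≤ 1} * m *
        ENNReal.ofReal (r ^ (m - 1))) :=
    Measurable.indicator (by measurability) measurableSet_Ioi
  rw [← lintegral_map hg (measurable_pnorm hα), map_pnorm_eq hα hm,
    lintegral_withDensity_eq_lintegral_mul _ hdens hg]
  have hpt : ∀ r : ℝ,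
      (((Ioi (0:ℝ)).indicator fun r =>
        volume {x : Fin m → ℝ | (∀ i, 0 < x i) ∧ pnorm α x ≤ 1} * m *
          ENNReal.ofReal (r ^ (m - 1))) * g) r =
      (Ioi (0:ℝ)).indicator (fun r =>
        volume {x : Fin m → ℝ | (∀ i, 0 < x i) ∧ pnorm α x ≤ 1} * m *
          ENNReal.ofReal (r ^ (m - 1)) * g r) r := by
    intro r
    by_cases hr : r ∈ Ioi (0:ℝ)
    · simp [indicator_of_mem hr]
    · simp [indicator_of_notMem hr]
  rw [lintegral_congr hpt, lintegral_indicator measurableSet_Ioi]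

lemma integrableOn_rpow_mul_exp_neg_rpow' (hα : 0 < α) {q : ℝ} (hq : -1 < q) :
    IntegrableOn (fun t : ℝ => t ^ q * exp (-(t ^ α))) (Ioi 0) := by
  have h := (integrableOn_Ioi_comp_rpow_iff'
      (fun t : ℝ => exp (-t) * t ^ ((q + 1)/α - 1)) (p := α) hα.ne').mpr
    (Real.GammaIntegral_convergent (div_pos (by linarith) hα))
  refine h.congr_fun ?_ measurableSet_Ioi
  intro x hx
  have hx' : (0:ℝ) < x := hx
  dsimp only
  rw [smul_eq_mul, ← rpow_mul hx'.le,
    show α * ((q + 1)/α - 1) = q + 1 - α by field_simp,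
    mul_comm (exp _) _, ← mul_assoc, ← rpow_add hx',
    show α - 1 + (q + 1 - α) = q by ring]

lemma integrableOn_exp_neg_abs_rpow (hα : 0 < α) :
    IntegrableOn (fun t : ℝ => exp (-(|t| ^ α))) (Ioi 0) := by
  have h := integrableOn_rpow_mul_exp_neg_rpow' hα (q := 0) (by norm_num)
  refine h.congr_fun ?_ measurableSet_Ioi
  intro x hx
  dsimp only
  rw [rpow_zero, one_mul, abs_of_pos hx]

lemma calibration (hα : 0 < α) (hm : 0 < m) :
    volume {x : Fin m → ℝ | (∀ i, 0 < x i) ∧ pnorm α x ≤ 1} * m =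
      ENNReal.ofReal
        (Real.Gamma (1/α) ^ m / (α ^ (m - 1) * Real.Gamma (m / α))) := by
  set V := volume {x : Fin m → ℝ | (∀ i, 0 < x i) ∧ pnorm α x ≤ 1} with hVdef
  have hGq : (0:ℝ) < (m : ℝ)/α := by positivity
  have hGpos : 0 < Real.Gamma ((m : ℝ)/α) := Real.Gamma_pos_of_pos hGq
  have hg : Measurable (fun r : ℝ => ENNReal.ofReal (exp (-(r ^ α)))) :=
    (Real.measurable_exp.comp (measurable_rpow_const α).neg).ennreal_ofReal
  have hpolar := lintegral_pnorm_polar hα hm hg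
  -- left side
  have hL : ∫⁻ x in {x : Fin m → ℝ | ∀ i, 0 < x i},
      ENNReal.ofReal (exp (-(pnorm α x ^ α))) =
        ENNReal.ofReal (Real.Gamma (1/α + 1) ^ m) := by
    set h : ℝ → ℝ := fun t => exp (-(|t| ^ α)) with hhdef
    set hind : ℝ → ℝ := (Ioi (0:ℝ)).indicator h with hinddef
    have hIntOn : IntegrableOn h (Ioi 0) := integrableOn_exp_neg_abs_rpow hα
    have hIntInd : Integrable hind := (integrable_indicator_iff measurableSet_Ioi).mpr hIntOn
    have hInt : Integrable (fun x : Fin m → ℝ => ∏ i, hind (x i)) :=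
      Integrable.fintype_prod (fun _ => hIntInd)
    have step1 : ∫⁻ x in {x : Fin m → ℝ | ∀ i, 0 < x i},
        ENNReal.ofReal (exp (-(pnorm α x ^ α))) =
        ∫⁻ x : Fin m → ℝ, ENNReal.ofReal (∏ i, hind (x i)) := by
      rw [← lintegral_indicator (measurableSet_posOrt m)]
      refine lintegral_congr fun x => ?_
      by_cases hx : x ∈ {x : Fin m → ℝ | ∀ i, 0 < x i}
      · rw [indicator_of_mem hx]
        congr 1
        have h1 : ∀ i, hind (x i) = h (x i) := fun i =>
          indicator_of_mem (mem_Ioi.mpr (hx i)) h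
        simp_rw [h1, hhdef]
        rw [← Real.exp_sum]
        congr 1
        rw [pnorm_rpow_self hα]
        rw [← Finset.sum_neg_distrib]
      · rw [indicator_of_notMem hx]
        simp only [mem_setOf_eq, not_forall, not_lt] at hx
        obtain ⟨i, hi⟩ := hx
        have : hind (x i) = 0 := indicator_of_notMem (by simpa using not_lt.mpr hi) h
        rw [Finset.prod_eq_zero (Finset.mem_univ i) this, ENNReal.ofReal_zero]
    have step3 : ∫⁻ x : Fin m → ℝ, ENNReal.ofReal (∏ i, hind (x i)) =
        ENNReal.ofReal (∫ x : Fin m → ℝ, ∏ i, hind (x i)) := by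
      rw [← ofReal_integral_eq_lintegral_ofReal hInt]
      exact ae_of_all _ fun x => Finset.prod_nonneg fun i _ =>
        indicator_nonneg (fun t _ => (exp_pos _).le) _
    have step4 : ∫ x : Fin m → ℝ, ∏ i, hind (x i) = (∫ t : ℝ, hind t) ^ m := by
      have := MeasureTheory.integral_fintype_prod_eq_pow (ι := Fin m) hind (μ := volume)
      rw [← volume_pi] at this
      rw [this, Fintype.card_fin]
    have step5 : ∫ t : ℝ, hind t = Real.Gamma (1/α + 1) := by
      rw [hinddef, integral_indicator measurableSet_Ioi]
      rw [show ∫ t in Ioi (0:ℝ), h t = ∫ t in Ioi (0:ℝ), exp (-(t ^ α)) from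
        setIntegral_congr_fun measurableSet_Ioi fun t ht => by
          rw [hhdef]; simp only; rw [abs_of_pos ht]]
      exact integral_exp_neg_rpow hα
    rw [step1, step3, step4, step5]
  -- right side
  have hR : ∫⁻ r in Ioi (0:ℝ), V * m * ENNReal.ofReal (r ^ (m - 1)) *
      ENNReal.ofReal (exp (-(r ^ α))) =
      V * m * ENNReal.ofReal ((1/α) * Real.Gamma ((m : ℝ)/α)) := by
    have hmeas : Measurable (fun r : ℝ =>
        ENNReal.ofReal (r ^ (m - 1)) * ENNReal.ofReal (exp (-(r ^ α)))) :=
      ((measurable_id.pow_const (m - 1)).ennreal_ofReal).mul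
        ((Real.measurable_exp.comp (measurable_rpow_const α).neg).ennreal_ofReal)
    calc ∫⁻ r in Ioi (0:ℝ), V * m * ENNReal.ofReal (r ^ (m - 1)) *
          ENNReal.ofReal (exp (-(r ^ α)))
        = ∫⁻ r in Ioi (0:ℝ), V * m *
            (ENNReal.ofReal (r ^ (m - 1)) * ENNReal.ofReal (exp (-(r ^ α)))) := by
          simp_rw [mul_assoc]
      _ = V * m * ∫⁻ r in Ioi (0:ℝ),
            ENNReal.ofReal (r ^ (m - 1)) * ENNReal.ofReal (exp (-(r ^ α))) :=
          lintegral_const_mul _ hmeas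
      _ = V * m * ∫⁻ r in Ioi (0:ℝ),
            ENNReal.ofReal (r ^ ((m : ℝ) - 1) * exp (-(r ^ α))) := by
          congr 1
          refine setLIntegral_congr_fun measurableSet_Ioi (fun r hr => ?_)
          have hr' : (0:ℝ) < r := hr
          rw [ENNReal.ofReal_mul (by positivity)]
          congr 2
          rw [← rpow_natCast r (m - 1), Nat.cast_sub hm, Nat.cast_one]
      _ = V * m * ENNReal.ofReal ((1/α) * Real.Gamma ((m : ℝ)/α)) := by
          congr 1
          rw [← ofReal_integral_eq_lintegral_ofReal
            (integrableOn_rpow_mul_exp_neg_rpow' hα (by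
              have : (1:ℝ) ≤ m := by exact_mod_cast hm
              linarith))
            (by
              filter_upwards [ae_restrict_mem measurableSet_Ioi] with t ht
              have ht' : (0:ℝ) < t := ht
              positivity)]
          congr 1
          rw [integral_rpow_mul_exp_neg_rpow hα (by
            have : (1:ℝ) ≤ m := by exact_mod_cast hm
            linarith)]
          congr 2
          ring
  have key : ENNReal.ofReal (Real.Gamma (1/α + 1) ^ m) =
      V * m * ENNReal.ofReal ((1/α) * Real.Gamma ((m : ℝ)/α)) := by
    rw [← hL, ← hR]
    exact hpolar
  have hBpos : (0:ℝ) < (1/α) * Real.Gamma ((m : ℝ)/α) :=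
    mul_pos (by positivity) hGpos
  have hBne : ENNReal.ofReal ((1/α) * Real.Gamma ((m : ℝ)/α)) ≠ 0 :=
    (ENNReal.ofReal_pos.mpr hBpos).ne'
  have hBnetop : ENNReal.ofReal ((1/α) * Real.Gamma ((m : ℝ)/α)) ≠ ⊤ :=
    ENNReal.ofReal_ne_top
  have hsolve : V * (m : ℝ≥0∞) =
      ENNReal.ofReal (Real.Gamma (1/α + 1) ^ m) /
        ENNReal.ofReal ((1/α) * Real.Gamma ((m : ℝ)/α)) := by
    rw [key, mul_div_assoc, ENNReal.div_self hBne hBnetop, mul_one]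
  rw [hsolve, ← ENNReal.ofReal_div_of_pos hBpos]
  congr 1
  have hG1 : Real.Gamma (1/α + 1) = (1/α) * Real.Gamma (1/α) :=
    Real.Gamma_add_one (by positivity)
  have hpow : α ^ (m - 1) * α = α ^ m := by
    rw [← pow_succ, Nat.sub_add_cancel hm]
  rw [hG1, mul_pow]
  rw [div_eq_div_iff (by positivity) (by positivity)]
  have hone : ((1:ℝ)/α) ^ m = 1 / α ^ m := by
    rw [div_pow, one_pow]
  rw [hone]
  field_simp
  ring_nf
  rw [show α * α ^ (m - 1) = α ^ m by rw [← pow_succ']; congr 1; omega]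

end polar

section series

lemma coth_sub_one {v : ℝ} (hv : 0 < v) :
    cothR v - 1 = 2 * (exp (-(2*v)) / (1 - exp (-(2*v)))) := by
  have hab : exp v * exp (-v) = 1 := by rw [← exp_add]; simp
  have h2v : exp (-(2*v)) = exp (-v) * exp (-v) := by rw [← exp_add]; ring_nf
  have h1 : 0 < exp v - exp (-v) := by
    have := exp_lt_exp.mpr (neg_lt_self hv); linarith
  have hfac : 1 - exp (-(2*v)) = exp (-v) * (exp v - exp (-v)) := by
    rw [h2v, ← hab]; ring
  have hb : exp (-v) ≠ 0 := (exp_pos _).ne'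
  rw [cothR, hfac, h2v]
  field_simp
  ring

lemma geom_expand {x : ℝ} (h0 : 0 ≤ x) (h1 : x < 1) :
    x / (1 - x) = ∑' k : ℕ, x ^ (k + 1) := by
  have h : ∑' k : ℕ, x ^ (k + 1) = ∑' k : ℕ, x * x ^ k := tsum_congr fun k => by ring
  rw [h, tsum_mul_left, tsum_geometric_of_lt_one h0 h1, div_eq_mul_inv]

lemma exp_term_eq {C r : ℝ} (k : ℕ) :
    exp (-(2 * ((k:ℝ) + 1) / C) * r) = exp (-(2 * (r/C))) ^ (k + 1) := by
  rw [← Real.exp_nat_mul]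
  congr 1
  push_cast
  ring

lemma coth_tsum {C r : ℝ} (σ : ℝ) (hC : 0 < C) (hr : 0 < r) :
    (cothR (r / C) - 1) * r ^ (σ - 1) =
      ∑' k : ℕ, 2 * (r ^ (σ - 1) * exp (-(2 * ((k:ℝ) + 1) / C) * r)) := by
  have hv : 0 < r / C := div_pos hr hC
  have hx0 : 0 ≤ exp (-(2*(r/C))) := (exp_pos _).le
  have hx1 : exp (-(2*(r/C))) < 1 := by
    rw [exp_lt_one_iff]
    have : 0 < 2 * (r/C) := by positivity
    linarith
  have hterm : ∀ k : ℕ, 2 * (r ^ (σ - 1) * exp (-(2 * ((k:ℝ) + 1) / C) * r)) =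
      (2 * r ^ (σ - 1)) * exp (-(2 * (r/C))) ^ (k + 1) := fun k => by
    rw [exp_term_eq]; ring
  rw [tsum_congr hterm, tsum_mul_left, ← geom_expand hx0 hx1, coth_sub_one hv]
  ring

lemma coth_summable {C r : ℝ} (σ : ℝ) (hC : 0 < C) (hr : 0 < r) :
    Summable (fun k : ℕ => 2 * (r ^ (σ - 1) * exp (-(2 * ((k:ℝ) + 1) / C) * r))) := by
  have hx0 : 0 ≤ exp (-(2*(r/C))) := (exp_pos _).le
  have hx1 : exp (-(2*(r/C))) < 1 := by
    rw [exp_lt_one_iff]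
    have : 0 < 2 * (r/C) := by positivity
    linarith
  refine ((summable_geometric_of_lt_one hx0 hx1).mul_left
    (2 * r ^ (σ - 1) * exp (-(2 * (r/C))))).congr fun k => ?_
  rw [exp_term_eq]
  ring

lemma term_lintegral {b σ : ℝ} (hb : 0 < b) (hσ : 1 < σ) :
    ∫⁻ r in Ioi (0:ℝ), ENNReal.ofReal (2 * (r ^ (σ - 1) * exp (-b * r))) =
      ENNReal.ofReal (2 * (b ^ (-σ) * Real.Gamma σ)) := by
  have hint : IntegrableOn (fun r : ℝ => r ^ (σ - 1) * exp (-b * r)) (Ioi 0) := by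
    have h := integrableOn_rpow_mul_exp_neg_mul_rpow
      (show (-1:ℝ) < σ - 1 by linarith) (show (0:ℝ) < 1 by norm_num) hb
    simp only [rpow_one] at h
    exact h
  rw [← ofReal_integral_eq_lintegral_ofReal (hint.const_mul 2) ?_]
  · congr 1
    rw [integral_const_mul]
    congr 1
    have hval := integral_rpow_mul_exp_neg_mul_rpow (show (0:ℝ) < 1 by norm_num)
      (show (-1:ℝ) < σ - 1 by linarith) hb
    simp only [rpow_one] at hval
    rw [hval, show (-(σ - 1 + 1)/1 : ℝ) = -σ by ring,
      show ((σ - 1 + 1)/1 : ℝ) = σ by ring]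
    norm_num
  · filter_upwards [ae_restrict_mem measurableSet_Ioi] with t ht
    have ht' : (0:ℝ) < t := ht
    positivity

lemma zeta_summable {σ : ℝ} (hσ : 1 < σ) :
    Summable (fun k : ℕ => ((k:ℝ) + 1) ^ (-σ)) := by
  have h := Real.summable_nat_rpow.mpr (show -σ < -1 by linarith)
  have h2 := (summable_nat_add_iff 1).mpr h
  refine h2.congr fun n => ?_
  push_cast
  rfl

lemma zeta_eq {σ : ℝ} : zetaR σ = ∑' k : ℕ, ((k:ℝ) + 1) ^ (-σ) := by
  rw [zetaR, ← Equiv.pnatEquivNat.symm.tsum_eq (fun k : ℕ+ => (k : ℝ) ^ (-σ))]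
  refine tsum_congr fun n => ?_
  congr 1
  have h : ((Equiv.pnatEquivNat.symm n : ℕ+) : ℕ) = n + 1 := rfl
  rw [show ((Equiv.pnatEquivNat.symm n : ℕ+) : ℝ) = ((n:ℝ) + 1) by
    exact_mod_cast congrArg (Nat.cast : ℕ → ℝ) h]

lemma zetaR_nonneg {σ : ℝ} : 0 ≤ zetaR σ :=
  tsum_nonneg fun k => rpow_nonneg (by positivity) _

end series

lemma final_arith {C K Γσ ζ σ : ℝ} (hC : 0 < C) :
    C ^ (-σ) * (K * (2 * ((2/C) ^ (-σ) * Γσ) * ζ)) = K * (Γσ / 2 ^ (σ - 1)) * ζ := by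
  have h2σ : (2:ℝ) ^ (σ - 1) = 2 ^ σ / 2 := by
    rw [rpow_sub (by norm_num), rpow_one]
  have h2neg : (2:ℝ) ^ (-σ) = (2 ^ σ)⁻¹ := rpow_neg (by norm_num) σ
  have hdiv : ((2:ℝ)/C) ^ (-σ) = 2 ^ (-σ) / C ^ (-σ) := div_rpow (show (0:ℝ) ≤ 2 by norm_num) hC.le (-σ)
  have hCne : C ^ (-σ) ≠ 0 := (rpow_pos_of_pos hC _).ne'
  have h2pos : (0:ℝ) < 2 ^ σ := rpow_pos_of_pos (by norm_num) σ
  rw [hdiv, h2neg, h2σ]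
  field_simp

theorem stmt_8 (m n : ℕ) (hm : 0 < m) (hn : 0 < n) (α β σ : ℝ)
    (hα : 0 < α) (hβ : 0 < β) (hσ : 1 < σ)
    (y : Fin n → ℝ) (hy : ∀ i, 0 < y i) :
    pnorm β y ^ (-σ) *
        ∫ x in {x : Fin m → ℝ | ∀ i, 0 < x i},
          (cothR (pnorm α x / pnorm β y) - 1) * pnorm α x ^ (σ - m) =
      Real.Gamma (1 / α) ^ m / (α ^ (m - 1) * Real.Gamma (m / α)) *
        (Real.Gamma σ / 2 ^ (σ - 1)) * zetaR σ := by
  have hC : 0 < pnorm β y := pnorm_pos hn hy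
  set C := pnorm β y with hCdef
  have hΓσ : 0 < Real.Gamma σ := Real.Gamma_pos_of_pos (by linarith)
  have hKnn : 0 ≤ Real.Gamma (1 / α) ^ m / (α ^ (m - 1) * Real.Gamma ((m:ℝ) / α)) := by
    have h1 : 0 < Real.Gamma (1/α) := Real.Gamma_pos_of_pos (by positivity)
    have h2 : 0 < Real.Gamma ((m:ℝ)/α) := Real.Gamma_pos_of_pos (by positivity)
    positivity
  have mcoth : Measurable cothR := by
    unfold cothR
    exact (Real.measurable_exp.add (Real.measurable_exp.comp measurable_neg)).div
      (Real.measurable_exp.sub (Real.measurable_exp.comp measurable_neg))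
  have hgm : Measurable (fun r : ℝ =>
      ENNReal.ofReal ((cothR (r / C) - 1) * r ^ (σ - (m:ℝ)))) :=
    (((mcoth.comp (measurable_id.div_const C)).sub measurable_const).mul
      (measurable_rpow_const (σ - (m:ℝ)))).ennreal_ofReal
  have hFnn : ∀ x : Fin m → ℝ, x ∈ {x : Fin m → ℝ | ∀ i, 0 < x i} →
      0 ≤ (cothR (pnorm α x / C) - 1) * pnorm α x ^ (σ - (m:ℝ)) := by
    intro x hx
    have hv : 0 < pnorm α x / C := div_pos (pnorm_pos hm hx) hC
    have h1 : 0 ≤ cothR (pnorm α x / C) - 1 := by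
      rw [coth_sub_one hv]
      have hx1 : exp (-(2*(pnorm α x / C))) < 1 := by
        rw [exp_lt_one_iff]
        have : 0 < 2*(pnorm α x / C) := by positivity
        linarith
      have hx0 : 0 ≤ exp (-(2*(pnorm α x / C))) := (exp_pos _).le
      have hd : 0 < 1 - exp (-(2*(pnorm α x / C))) := by linarith
      positivity
    exact mul_nonneg h1 (rpow_nonneg (pnorm_nonneg _ _) _)
  have hmF : Measurable (fun x : Fin m → ℝ =>
      (cothR (pnorm α x / C) - 1) * pnorm α x ^ (σ - (m:ℝ))) :=
    ((mcoth.comp ((measurable_pnorm hα).div_const C)).sub measurable_const).mul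
      ((measurable_rpow_const _).comp (measurable_pnorm hα))
  have hbl : ∫ x in {x : Fin m → ℝ | ∀ i, 0 < x i},
      (cothR (pnorm α x / C) - 1) * pnorm α x ^ (σ - (m:ℝ)) =
      (∫⁻ x in {x : Fin m → ℝ | ∀ i, 0 < x i},
        ENNReal.ofReal ((cothR (pnorm α x / C) - 1) * pnorm α x ^ (σ - (m:ℝ)))).toReal := by
    rw [integral_eq_lintegral_of_nonneg_ae
      ((ae_restrict_iff' (measurableSet_posOrt m)).mpr (ae_of_all _ hFnn))
      hmF.aestronglyMeasurable]
  have hpolar' : (∫⁻ x in {x : Fin m → ℝ | ∀ i, 0 < x i},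
      ENNReal.ofReal ((cothR (pnorm α x / C) - 1) * pnorm α x ^ (σ - (m:ℝ)))) =
      ∫⁻ r in Ioi (0:ℝ),
        volume {x : Fin m → ℝ | (∀ i, 0 < x i) ∧ pnorm α x ≤ 1} * m *
          ENNReal.ofReal (r ^ (m - 1)) *
          ENNReal.ofReal ((cothR (r / C) - 1) * r ^ (σ - (m:ℝ))) :=
    lintegral_pnorm_polar hα hm hgm
  have htmeas : ∀ k : ℕ, Measurable (fun r : ℝ =>
      ENNReal.ofReal (2 * (r ^ (σ - 1) * exp (-(2 * ((k:ℝ) + 1) / C) * r)))) := by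
    intro k
    exact (((measurable_rpow_const (σ - 1)).mul
      (Real.measurable_exp.comp (measurable_id.const_mul _))).const_mul 2).ennreal_ofReal
  have hstep : ∫⁻ r in Ioi (0:ℝ),
      volume {x : Fin m → ℝ | (∀ i, 0 < x i) ∧ pnorm α x ≤ 1} * m *
        ENNReal.ofReal (r ^ (m - 1)) *
        ENNReal.ofReal ((cothR (r / C) - 1) * r ^ (σ - (m:ℝ))) =
      volume {x : Fin m → ℝ | (∀ i, 0 < x i) ∧ pnorm α x ≤ 1} * m *
        ∑' k : ℕ, ENNReal.ofReal (2 * ((2 * ((k:ℝ) + 1) / C) ^ (-σ) * Real.Gamma σ)) := by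
    have hcongr : ∫⁻ r in Ioi (0:ℝ),
        volume {x : Fin m → ℝ | (∀ i, 0 < x i) ∧ pnorm α x ≤ 1} * m *
          ENNReal.ofReal (r ^ (m - 1)) *
          ENNReal.ofReal ((cothR (r / C) - 1) * r ^ (σ - (m:ℝ))) =
        ∫⁻ r in Ioi (0:ℝ),
          volume {x : Fin m → ℝ | (∀ i, 0 < x i) ∧ pnorm α x ≤ 1} * m *
            ∑' k : ℕ, ENNReal.ofReal (2 * (r ^ (σ - 1) *
              exp (-(2 * ((k:ℝ) + 1) / C) * r))) := by
      refine setLIntegral_congr_fun measurableSet_Ioi (fun r hr => ?_)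
      have hr' : (0:ℝ) < r := hr
      rw [mul_assoc (volume {x : Fin m → ℝ | (∀ i, 0 < x i) ∧ pnorm α x ≤ 1} * (m : ℝ≥0∞))]
      congr 1
      have hreal : r ^ (m - 1) * ((cothR (r / C) - 1) * r ^ (σ - (m:ℝ))) =
          (cothR (r / C) - 1) * r ^ (σ - 1) := by
        rw [← rpow_natCast r (m - 1), Nat.cast_sub hm, Nat.cast_one, mul_comm, mul_assoc,
          ← rpow_add hr', show σ - (m:ℝ) + ((m:ℝ) - 1) = σ - 1 by ring]
      rw [← ENNReal.ofReal_mul (by positivity), hreal, coth_tsum σ hC hr',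
        ENNReal.ofReal_tsum_of_nonneg (fun k => by positivity) (coth_summable σ hC hr')]
    rw [hcongr, lintegral_const_mul _ (Measurable.ennreal_tsum htmeas),
      lintegral_tsum (fun k => (htmeas k).aemeasurable)]
    congr 1
    refine tsum_congr fun k => ?_
    exact term_lintegral (by positivity) hσ
  have hsum : ∑' k : ℕ, ENNReal.ofReal (2 * ((2 * ((k:ℝ) + 1) / C) ^ (-σ) * Real.Gamma σ)) =
      ENNReal.ofReal (2 * ((2/C) ^ (-σ) * Real.Gamma σ)) * ENNReal.ofReal (zetaR σ) := by
    have hterm : ∀ k : ℕ,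
        ENNReal.ofReal (2 * ((2 * ((k:ℝ) + 1) / C) ^ (-σ) * Real.Gamma σ)) =
        ENNReal.ofReal (2 * ((2/C) ^ (-σ) * Real.Gamma σ)) *
          ENNReal.ofReal (((k:ℝ) + 1) ^ (-σ)) := by
      intro k
      rw [← ENNReal.ofReal_mul (by positivity)]
      congr 1
      rw [show 2 * ((k:ℝ) + 1) / C = (2/C) * ((k:ℝ) + 1) by ring,
        Real.mul_rpow (by positivity) (by positivity)]
      ring
    rw [tsum_congr hterm, ENNReal.tsum_mul_left]
    congr 1
    rw [← ENNReal.ofReal_tsum_of_nonneg (fun k => rpow_nonneg (by positivity) _)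
      (zeta_summable hσ), ← zeta_eq]
  have hc1 : (0:ℝ) ≤ 2 * ((2/C) ^ (-σ) * Real.Gamma σ) :=
    mul_nonneg (by norm_num) (mul_nonneg (rpow_nonneg (by positivity) _) hΓσ.le)
  rw [hbl, hpolar', hstep, hsum, calibration hα hm,
    ← ENNReal.ofReal_mul hc1, ← ENNReal.ofReal_mul hKnn,
    ENNReal.toReal_ofReal (mul_nonneg hKnn (mul_nonneg hc1 zetaR_nonneg))]
  exact final_arith hC
end

section
/- Let m, n ∈ ℕ, α, β > 0, σ > 1. For every x ∈ ℝ₊^m, the weight function ϖ(σ, x) := ‖x‖_α^{σ} ∫_{ℝ₊^n} (coth(‖x‖_α/‖y‖_β) − 1) ‖y‖_β^{−n−σ} dy equals the constant K₁(σ) := (Γ(1/β)^n/(β^{n−1} Γ(n/β))) · (Γ(σ)/2^{σ−1}) · ζ(σ); in particular it is independent of x. -/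
open MeasureTheory Real Set

section aux

variable {n : ℕ} {β : ℝ}

lemma pnorm_nonneg_s9 (β : ℝ) (y : Fin n → ℝ) : 0 ≤ pnorm β y :=
  Real.rpow_nonneg (Finset.sum_nonneg fun i _ => Real.rpow_nonneg (abs_nonneg _) _) _

lemma sum_rpow_nonneg (β : ℝ) (y : Fin n → ℝ) : 0 ≤ ∑ i, |y i| ^ β :=
  Finset.sum_nonneg fun i _ => Real.rpow_nonneg (abs_nonneg _) _

lemma pnorm_rpow (hβ : 0 < β) (y : Fin n → ℝ) : pnorm β y ^ β = ∑ i, |y i| ^ β := by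
  rw [pnorm, ← Real.rpow_mul (sum_rpow_nonneg β y), one_div, inv_mul_cancel₀ hβ.ne',
    Real.rpow_one]

lemma pnorm_pos_s9 (hβ : 0 < β) (hn : 0 < n) {y : Fin n → ℝ} (hy : ∀ i, 0 < y i) :
    0 < pnorm β y := by
  apply Real.rpow_pos_of_pos
  have h0 : (0:ℝ) < |y ⟨0, hn⟩| ^ β :=
    Real.rpow_pos_of_pos (abs_pos.mpr (hy _).ne') _
  calc (0:ℝ) < |y ⟨0, hn⟩| ^ β := h0
    _ ≤ ∑ i, |y i| ^ β := Finset.single_le_sum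
        (fun i _ => Real.rpow_nonneg (abs_nonneg _) _) (Finset.mem_univ _)

lemma pnorm_smul_s9 (hβ : 0 < β) {r : ℝ} (hr : 0 ≤ r) (y : Fin n → ℝ) :
    pnorm β (r • y) = r * pnorm β y := by
  have h1 : ∀ i, |(r • y) i| ^ β = r ^ β * |y i| ^ β := fun i => by
    simp only [Pi.smul_apply, smul_eq_mul, abs_mul, abs_of_nonneg hr]
    rw [Real.mul_rpow hr (abs_nonneg _)]
  simp only [pnorm, h1, ← Finset.mul_sum]
  rw [Real.mul_rpow (Real.rpow_nonneg hr _) (sum_rpow_nonneg β y),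
    ← Real.rpow_mul hr, mul_one_div, div_self hβ.ne', Real.rpow_one]

lemma continuous_pnorm_s9 (hβ : 0 < β) : Continuous (fun y : Fin n → ℝ => pnorm β y) := by
  apply Continuous.rpow_const
  · exact continuous_finset_sum _ fun i _ =>
      ((continuous_abs.comp (continuous_apply i)).rpow_const fun x => Or.inr hβ.le)
  · exact fun x => Or.inr (by positivity)

lemma measurable_pnorm_s9 (hβ : 0 < β) : Measurable (fun y : Fin n → ℝ => pnorm β y) :=
  (continuous_pnorm_s9 hβ).measurable

lemma measurableSet_orthant : MeasurableSet {y : Fin n → ℝ | ∀ i, 0 < y i} := by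
  have : {y : Fin n → ℝ | ∀ i, 0 < y i} = ⋂ i, {y | 0 < y i} := by
    ext y; simp
  rw [this]
  exact MeasurableSet.iInter fun i =>
    measurableSet_lt measurable_const (measurable_pi_apply i)

end aux

section measure
open scoped Pointwise

variable {n : ℕ} {β : ℝ}

noncomputable def unitVol (n : ℕ) (β : ℝ) : ENNReal :=
  volume ({y : Fin n → ℝ | pnorm β y ≤ 1} ∩ {y | ∀ i, 0 < y i})

lemma vol_ball (hβ : 0 < β) (hn : 0 < n) {r : ℝ} (hr : 0 ≤ r) :
    volume ({y : Fin n → ℝ | pnorm β y ≤ r} ∩ {y | ∀ i, 0 < y i}) =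
      ENNReal.ofReal (r ^ n) * unitVol n β := by
  rcases eq_or_lt_of_le hr with rfl | hr
  · have : ({y : Fin n → ℝ | pnorm β y ≤ 0} ∩ {y | ∀ i, 0 < y i}) = ∅ := by
      ext y
      simp only [mem_inter_iff, mem_setOf_eq, mem_empty_iff_false, iff_false, not_and]
      intro h hy
      exact absurd h (not_le.mpr (pnorm_pos_s9 hβ hn hy))
    rw [this, measure_empty, zero_pow hn.ne', ENNReal.ofReal_zero, zero_mul]
  · have hset : {y : Fin n → ℝ | pnorm β y ≤ r} ∩ {y | ∀ i, 0 < y i} =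
        r • ({y : Fin n → ℝ | pnorm β y ≤ 1} ∩ {y | ∀ i, 0 < y i}) := by
      ext y
      rw [mem_smul_set_iff_inv_smul_mem₀ hr.ne']
      simp only [mem_inter_iff, mem_setOf_eq, Pi.smul_apply, smul_eq_mul]
      rw [pnorm_smul_s9 hβ (inv_nonneg.mpr hr.le) y]
      constructor
      · rintro ⟨h1, h2⟩
        refine ⟨?_, fun i => mul_pos (inv_pos.mpr hr) (h2 i)⟩
        rw [inv_mul_le_iff₀ hr, mul_one]; exact h1
      · rintro ⟨h1, h2⟩
        have h2' : ∀ i, 0 < y i := fun i => by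
          have := h2 i
          nlinarith [inv_pos.mpr hr]
        refine ⟨?_, h2'⟩
        rw [inv_mul_le_iff₀ hr, mul_one] at h1; exact h1
    rw [hset, Measure.addHaar_smul, Module.finrank_pi, abs_of_nonneg (pow_nonneg hr.le _), Fintype.card_fin]
    rfl

lemma unitVol_lt_top (hβ : 0 < β) : unitVol n β < ⊤ := by
  have hsub : ({y : Fin n → ℝ | pnorm β y ≤ 1} ∩ {y | ∀ i, 0 < y i}) ⊆
      univ.pi fun _ : Fin n => Icc (0:ℝ) 1 := by
    rintro y ⟨h1, h2⟩ i _
    have hS : ∑ j, |y j| ^ β ≤ 1 := by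
      have h := Real.rpow_le_rpow (pnorm_nonneg_s9 β y) h1 hβ.le
      rwa [pnorm_rpow hβ, Real.one_rpow] at h
    have hterm : |y i| ^ β ≤ 1 :=
      le_trans (Finset.single_le_sum
        (fun j _ => Real.rpow_nonneg (abs_nonneg _) _) (Finset.mem_univ i)) hS
    refine ⟨(h2 i).le, ?_⟩
    by_contra hlt
    push_neg at hlt
    have : (1:ℝ) < |y i| ^ β := by
      apply Real.one_lt_rpow_iff_of_pos (abs_pos.mpr (h2 i).ne') |>.mpr
      left
      constructor
      · rw [abs_of_pos (h2 i)]; exact hlt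
      · exact hβ
    linarith
  refine lt_of_le_of_lt (measure_mono hsub) ?_
  rw [volume_pi_pi]
  simp [Real.volume_Icc]

end measure
section measure2
open scoped Pointwise

variable {n : ℕ} {β : ℝ}

lemma map_pnorm (hβ : 0 < β) (hn : 0 < n) :
    Measure.map (fun y : Fin n → ℝ => pnorm β y)
        (volume.restrict {y : Fin n → ℝ | ∀ i, 0 < y i}) =
      volume.withDensity (fun r => (Ioi (0:ℝ)).indicator
        (fun r => ENNReal.ofReal ((n * (unitVol n β).toReal) * r ^ (n-1))) r) := by
  set V : ℝ := (unitVol n β).toReal with hV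
  have hV0 : 0 ≤ V := ENNReal.toReal_nonneg
  have hVfin : unitVol n β ≠ ⊤ := (unitVol_lt_top hβ).ne
  have hOr : MeasurableSet {y : Fin n → ℝ | ∀ i, 0 < y i} := measurableSet_orthant
  have hballe : ∀ r : ℝ, 0 ≤ r →
      volume ({y : Fin n → ℝ | pnorm β y ≤ r} ∩ {y | ∀ i, 0 < y i})
      = ENNReal.ofReal (r ^ n * V) := by
    intro r hr
    rw [vol_ball hβ hn hr, ENNReal.ofReal_mul (pow_nonneg hr _)]
    congr 1
    exact (ENNReal.ofReal_toReal hVfin).symm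
  have hmap : ∀ a b : ℝ, a < b → Measure.map (fun y : Fin n → ℝ => pnorm β y)
      (volume.restrict {y : Fin n → ℝ | ∀ i, 0 < y i}) (Ioc a b)
      = ENNReal.ofReal ((max b 0) ^ n * V - (max a 0) ^ n * V) := by
    intro a b hab
    rw [Measure.map_apply (measurable_pnorm_s9 hβ) measurableSet_Ioc,
      Measure.restrict_apply' hOr]
    rcases le_or_gt b 0 with hb | hb
    · have hempty : (fun y : Fin n → ℝ => pnorm β y) ⁻¹' Ioc a b ∩ {y | ∀ i, 0 < y i} = ∅ := by
        ext y
        simp only [mem_inter_iff, mem_preimage, mem_Ioc, mem_setOf_eq, mem_empty_iff_false,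
          iff_false, not_and, and_imp]
        intro _ hyb hy
        exact absurd hyb (not_le.mpr (lt_of_le_of_lt hb (pnorm_pos_s9 hβ hn hy)))
      rw [hempty, measure_empty, max_eq_right hb, max_eq_right (hab.le.trans hb)]
      simp
    · have ha' : (0:ℝ) ≤ max a 0 := le_max_right a 0
      have hset : (fun y : Fin n → ℝ => pnorm β y) ⁻¹' Ioc a b ∩ {y | ∀ i, 0 < y i} =
          ({y : Fin n → ℝ | pnorm β y ≤ b} ∩ {y | ∀ i, 0 < y i}) \
            ({y : Fin n → ℝ | pnorm β y ≤ max a 0} ∩ {y | ∀ i, 0 < y i}) := by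
        ext y
        simp only [mem_inter_iff, mem_preimage, mem_Ioc, mem_setOf_eq, mem_diff, not_and]
        constructor
        · rintro ⟨⟨hay, hyb⟩, hy⟩
          exact ⟨⟨hyb, hy⟩, fun hya _ =>
            absurd hya (not_le.mpr (max_lt hay (pnorm_pos_s9 hβ hn hy)))⟩
        · rintro ⟨⟨hyb, hy⟩, hne⟩
          refine ⟨⟨?_, hyb⟩, hy⟩
          by_contra hle
          push_neg at hle
          exact hne (le_trans hle (le_max_left a 0)) hy
      have hsub : ({y : Fin n → ℝ | pnorm β y ≤ max a 0} ∩ {y | ∀ i, 0 < y i}) ⊆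
          ({y : Fin n → ℝ | pnorm β y ≤ b} ∩ {y | ∀ i, 0 < y i}) :=
        inter_subset_inter (fun y hy => le_trans hy (max_le hab.le hb.le)) Subset.rfl
      have hmeas2 : MeasurableSet ({y : Fin n → ℝ | pnorm β y ≤ max a 0} ∩ {y | ∀ i, 0 < y i}) :=
        (measurable_pnorm_s9 hβ measurableSet_Iic).inter hOr
      rw [hset, measure_diff hsub hmeas2.nullMeasurableSet
        (by rw [hballe _ ha']; exact ENNReal.ofReal_ne_top),
        hballe b hb.le, hballe _ ha', max_eq_left hb.le,
        ← ENNReal.ofReal_sub _ (mul_nonneg (pow_nonneg ha' _) hV0)]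
  have hdens : ∀ a b : ℝ, a < b →
      (volume.withDensity (fun r => (Ioi (0:ℝ)).indicator
        (fun r => ENNReal.ofReal ((n * V) * r ^ (n-1))) r)) (Ioc a b)
      = ENNReal.ofReal ((max b 0) ^ n * V - (max a 0) ^ n * V) := by
    intro a b hab
    rw [withDensity_apply _ measurableSet_Ioc]
    rw [lintegral_indicator measurableSet_Ioi, Measure.restrict_restrict measurableSet_Ioi,
      inter_comm, Ioc_inter_Ioi]
    rcases le_or_gt b 0 with hb | hb
    · rw [Ioc_eq_empty (by simp only [not_lt]; exact hb.trans (le_max_right a 0)),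
        Measure.restrict_empty, lintegral_zero_measure,
        max_eq_right hb, max_eq_right (hab.le.trans hb), sub_self, ENNReal.ofReal_zero]
    · have ha' : (0:ℝ) ≤ max a 0 := le_max_right a 0
      have hab' : max a 0 ≤ b := max_le hab.le hb.le
      have hint : IntegrableOn (fun r : ℝ => (n * V) * r ^ (n-1)) (Ioc (max a 0) b) :=
        (continuous_const.mul (continuous_pow (n-1))).integrableOn_Ioc
      rw [← ofReal_integral_eq_lintegral_ofReal hint]
      · rw [← intervalIntegral.integral_of_le hab', intervalIntegral.integral_const_mul,
          integral_pow, max_eq_left hb.le]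
        congr 1
        have hn1 : n - 1 + 1 = n := Nat.succ_pred_eq_of_pos hn
        rw [hn1]
        have hcast : ((n - 1 : ℕ) : ℝ) + 1 = (n : ℝ) := by
          rw [Nat.cast_sub hn]; ring
        rw [hcast]
        have hnne : (n : ℝ) ≠ 0 := Nat.cast_ne_zero.mpr hn.ne'
        field_simp
      · filter_upwards [ae_restrict_mem measurableSet_Ioc] with r hr
        exact mul_nonneg (mul_nonneg (Nat.cast_nonneg n) hV0)
          (pow_nonneg (ha'.trans hr.1.le) _)
  exact Measure.ext_of_Ioc' _ _
    (fun a b hab => by rw [hmap a b hab]; exact ENNReal.ofReal_ne_top)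
    (fun a b hab => by rw [hmap a b hab, hdens a b hab])

end measure2
section radial

variable {n : ℕ} {β : ℝ}

lemma lintegral_orthant (hβ : 0 < β) (hn : 0 < n) (f : ℝ → ENNReal) (hf : Measurable f) :
    ∫⁻ y in {y : Fin n → ℝ | ∀ i, 0 < y i}, f (pnorm β y) =
      ∫⁻ r in Ioi (0:ℝ),
        ENNReal.ofReal ((n * (unitVol n β).toReal) * r ^ (n-1)) * f r := by
  have hd : Measurable fun r : ℝ => (Ioi (0:ℝ)).indicator
      (fun r => ENNReal.ofReal ((n * (unitVol n β).toReal) * r ^ (n-1))) r :=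
    ((continuous_const.mul (continuous_pow (n-1))).measurable.ennreal_ofReal).indicator
      measurableSet_Ioi
  rw [← lintegral_map hf (measurable_pnorm_s9 hβ), map_pnorm hβ hn,
    lintegral_withDensity_eq_lintegral_mul _ hd hf, ← lintegral_indicator measurableSet_Ioi]
  congr 1
  funext r
  by_cases hr : r ∈ Ioi (0:ℝ)
  · simp [indicator_of_mem hr]
  · simp [indicator_of_notMem hr]

lemma K_eq (hβ : 0 < β) (hn : 0 < n) :
    (n : ℝ) * (unitVol n β).toReal =
      Real.Gamma (1/β) ^ n / (β ^ (n-1) * Real.Gamma (n/β)) := by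
  set K := (n : ℝ) * (unitVol n β).toReal with hK
  have hK0 : 0 ≤ K := mul_nonneg (Nat.cast_nonneg n) ENNReal.toReal_nonneg
  have hfc : Continuous fun r : ℝ => Real.exp (-|r| ^ β) :=
    Real.continuous_exp.comp (continuous_abs.rpow_const (fun x => Or.inr hβ.le)).neg
  have hrad := lintegral_orthant hβ hn (fun r => ENNReal.ofReal (Real.exp (-|r| ^ β)))
      (ENNReal.measurable_ofReal.comp hfc.measurable)
  set h : ℝ → ℝ := (Ioi (0:ℝ)).indicator (fun t => Real.exp (-|t| ^ β)) with hh
  have hprod : ∀ y : Fin n → ℝ, ({y : Fin n → ℝ | ∀ i, 0 < y i}).indicator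
      (fun y => ∏ i, Real.exp (-|y i| ^ β)) y = ∏ i, h (y i) := by
    intro y
    by_cases hy : y ∈ {y : Fin n → ℝ | ∀ i, 0 < y i}
    · rw [indicator_of_mem hy]
      exact Finset.prod_congr rfl fun i _ => (indicator_of_mem (mem_Ioi.mpr (hy i)) (fun t => Real.exp (-|t| ^ β))).symm
    · rw [indicator_of_notMem hy]
      have hy' : ∃ i, ¬ (0 < y i) := by
        by_contra hc; push_neg at hc; exact hy hc
      obtain ⟨i, hi⟩ := hy'
      symm
      apply Finset.prod_eq_zero (Finset.mem_univ i)
      rw [hh, indicator_of_notMem (by simpa using hi)]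
  have h1d : ∫ t, h t = Real.Gamma (1/β + 1) := by
    rw [hh, integral_indicator measurableSet_Ioi]
    have heq : EqOn (fun t : ℝ => Real.exp (-|t| ^ β)) (fun t => Real.exp (-t ^ β)) (Ioi 0) :=
      fun t ht => by simp only; rw [abs_of_pos ht]
    rw [setIntegral_congr_fun measurableSet_Ioi heq, integral_exp_neg_rpow hβ]
  have hGpos : 0 < Real.Gamma (1/β + 1) := Real.Gamma_pos_of_pos (by positivity)
  have hval : ∫ y : Fin n → ℝ, ∏ i, h (y i) = Real.Gamma (1/β+1) ^ n := by
    have h0 : ∫ y : Fin n → ℝ, ∏ i, h (y i) = (∫ t, h t) ^ Fintype.card (Fin n) :=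
      MeasureTheory.integral_fintype_prod_eq_pow h
    rw [h0, h1d, Fintype.card_fin]
  have hintg : Integrable (fun y : Fin n → ℝ => ∏ i, h (y i)) := by
    by_contra hni
    rw [integral_undef hni] at hval
    have := pow_pos hGpos n
    linarith
  have hnonneg_h : ∀ t, 0 ≤ h t := fun t =>
    indicator_nonneg (fun t _ => (Real.exp_pos _).le) t
  have hLHS : ∫⁻ y in {y : Fin n → ℝ | ∀ i, 0 < y i},
      ENNReal.ofReal (Real.exp (-|pnorm β y| ^ β)) =
        ENNReal.ofReal (Real.Gamma (1/β+1) ^ n) := by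
    have heq : ∀ y : Fin n → ℝ, ENNReal.ofReal (Real.exp (-|pnorm β y| ^ β))
        = ENNReal.ofReal (∏ i, Real.exp (-|y i| ^ β)) := by
      intro y
      rw [abs_of_nonneg (pnorm_nonneg_s9 β y), pnorm_rpow hβ, ← Finset.sum_neg_distrib,
        Real.exp_sum]
    simp_rw [heq]
    rw [← lintegral_indicator measurableSet_orthant]
    have heq2 : ∀ y : Fin n → ℝ, ({y : Fin n → ℝ | ∀ i, 0 < y i}).indicator
        (fun y => ENNReal.ofReal (∏ i, Real.exp (-|y i| ^ β))) y
        = ENNReal.ofReal (∏ i, h (y i)) := by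
      intro y
      rw [← hprod y]
      by_cases hy : y ∈ {y : Fin n → ℝ | ∀ i, 0 < y i}
      · rw [indicator_of_mem hy, indicator_of_mem hy]
      · rw [indicator_of_notMem hy, indicator_of_notMem hy, ENNReal.ofReal_zero]
    simp_rw [heq2]
    rw [← ofReal_integral_eq_lintegral_ofReal hintg
      (ae_of_all _ fun y => Finset.prod_nonneg fun i _ => hnonneg_h (y i)), hval]
  have hq : (-1:ℝ) < (n:ℝ) - 1 := by
    have : (1:ℝ) ≤ n := by exact_mod_cast hn
    linarith
  have hI : ∫ r in Ioi (0:ℝ), r ^ (n-1) * Real.exp (-r ^ β) =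
      (1/β) * Real.Gamma ((n:ℝ)/β) := by
    have h0 := integral_rpow_mul_exp_neg_rpow hβ hq
    rw [sub_add_cancel] at h0
    rw [← h0]
    refine setIntegral_congr_fun measurableSet_Ioi fun x hx => ?_
    show x ^ (n-1) * Real.exp (-x ^ β) = x ^ ((n:ℝ)-1) * Real.exp (-x ^ β)
    rw [← Real.rpow_natCast x (n-1), Nat.cast_sub hn, Nat.cast_one]
  have hGn : 0 < Real.Gamma ((n:ℝ)/β) :=
    Real.Gamma_pos_of_pos (div_pos (by exact_mod_cast hn) hβ)
  have hIint : IntegrableOn (fun r : ℝ => r ^ (n-1) * Real.exp (-r ^ β)) (Ioi 0) := by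
    by_contra hni
    rw [integral_undef hni] at hI
    have := mul_pos (one_div_pos.mpr hβ) hGn
    linarith
  have hRHS : ∫⁻ r in Ioi (0:ℝ), ENNReal.ofReal (K * r ^ (n-1)) *
      ENNReal.ofReal (Real.exp (-|r| ^ β)) =
        ENNReal.ofReal (K * ((1/β) * Real.Gamma ((n:ℝ)/β))) := by
    have heq : ∀ r, r ∈ Ioi (0:ℝ) →
        ENNReal.ofReal (K * r ^ (n-1)) * ENNReal.ofReal (Real.exp (-|r| ^ β))
        = ENNReal.ofReal (K * (r ^ (n-1) * Real.exp (-r ^ β))) := by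
      intro r hr
      rw [abs_of_pos hr, ← ENNReal.ofReal_mul (mul_nonneg hK0 (pow_nonneg hr.le _)), mul_assoc]
    rw [setLIntegral_congr_fun measurableSet_Ioi heq,
      ← ofReal_integral_eq_lintegral_ofReal (hIint.const_mul K)
        (by filter_upwards [ae_restrict_mem measurableSet_Ioi] with r hr
            exact mul_nonneg hK0 (mul_nonneg (pow_nonneg (le_of_lt hr) _) (Real.exp_pos _).le)),
      MeasureTheory.integral_const_mul, hI]
  rw [hLHS, hRHS] at hrad
  have key : Real.Gamma (1/β+1) ^ n = K * ((1/β) * Real.Gamma ((n:ℝ)/β)) :=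
    (ENNReal.ofReal_eq_ofReal_iff (by positivity)
      (mul_nonneg hK0 (mul_nonneg (by positivity) hGn.le))).mp hrad
  have hg1 : Real.Gamma (1/β+1) = (1/β) * Real.Gamma (1/β) := by
    rw [Real.Gamma_add_one (by positivity : (1:ℝ)/β ≠ 0)]
  rw [hg1] at key
  have hβn : β ^ n = β ^ (n-1) * β := by
    rw [← pow_succ, Nat.sub_add_cancel hn]
  have hne2 : (1/β) * Real.Gamma ((n:ℝ)/β) ≠ 0 := by positivity
  have hKval : K = ((1/β) * Real.Gamma (1/β))^n / ((1/β) * Real.Gamma ((n:ℝ)/β)) := by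
    rw [key]
    field_simp
  rw [hKval, mul_pow]
  rw [div_eq_div_iff hne2 (by positivity)]
  field_simp
  calc β * (1/β)^n * β^(n-1) = (β^(n-1)*β) / β^n := by ring
    _ = 1 := by rw [← hβn, div_self (by positivity)]
end radial
section invint

lemma image_inv_Ioi : Inv.inv '' (Ioi (0:ℝ)) = Ioi 0 := by
  ext x
  constructor
  · rintro ⟨y, hy, rfl⟩
    exact mem_Ioi.mpr (inv_pos.mpr (mem_Ioi.mp hy))
  · intro hx
    exact ⟨x⁻¹, mem_Ioi.mpr (inv_pos.mpr (mem_Ioi.mp hx)), inv_inv x⟩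

lemma integral_inv_exp {σ : ℝ} (hσ : 0 < σ) {c : ℝ} (hc : 0 < c) :
    ∫ r in Ioi (0:ℝ), r ^ (-1 - σ) * Real.exp (-(c / r)) = Real.Gamma σ * c ^ (-σ) := by
  have hder : ∀ x ∈ Ioi (0:ℝ), HasDerivWithinAt Inv.inv (-(x ^ 2)⁻¹) (Ioi 0) x :=
    fun x hx => (hasDerivAt_inv (ne_of_gt hx)).hasDerivWithinAt
  have hinj : InjOn Inv.inv (Ioi (0:ℝ)) := inv_injective.injOn
  have h0 := integral_image_eq_integral_abs_deriv_smul measurableSet_Ioi hder hinj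
    (fun r => r ^ (-1 - σ) * Real.exp (-(c / r)))
  rw [image_inv_Ioi] at h0
  rw [h0]
  have heq : ∀ x, x ∈ Ioi (0:ℝ) →
      |(-(x ^ 2)⁻¹)| • ((Inv.inv x) ^ (-1 - σ) * Real.exp (-(c / (Inv.inv x))))
        = x ^ (σ - 1) * Real.exp (-(c * x)) := by
    intro x hx
    have hx0 : (0:ℝ) < x := hx
    have h1 : (x⁻¹ : ℝ) ^ (-1 - σ) = x ^ (1 + σ) := by
      rw [← Real.rpow_neg_one x, ← Real.rpow_mul hx0.le]
      congr 1
      ring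
    have h2 : ((x:ℝ) ^ (2:ℕ))⁻¹ = x ^ (-2:ℝ) := by
      rw [Real.rpow_neg hx0.le]
      congr 1
      rw [← Real.rpow_natCast x 2]
      norm_num
    show |(-(x ^ 2)⁻¹)| * ((x⁻¹) ^ (-1 - σ) * Real.exp (-(c / x⁻¹))) = _
    rw [abs_neg, abs_inv, abs_of_pos (pow_pos hx0 2), div_inv_eq_mul, h1, h2, ← mul_assoc,
      ← Real.rpow_add hx0]
    congr 2
    ring
  rw [setIntegral_congr_fun measurableSet_Ioi heq]
  have h3 : ∀ x, x ∈ Ioi (0:ℝ) →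
      x ^ (σ - 1) * Real.exp (-(c * x)) = x ^ (σ - 1) * Real.exp (-c * x ^ (1:ℝ)) := by
    intro x hx
    rw [Real.rpow_one, neg_mul]
  rw [setIntegral_congr_fun measurableSet_Ioi h3,
    integral_rpow_mul_exp_neg_mul_rpow one_pos (by linarith : (-1:ℝ) < σ - 1) hc]
  rw [sub_add_cancel, div_one, div_one]
  ring

lemma integrableOn_inv_exp {σ : ℝ} (hσ : 0 < σ) {c : ℝ} (hc : 0 < c) :
    IntegrableOn (fun r : ℝ => r ^ (-1 - σ) * Real.exp (-(c / r))) (Ioi 0) := by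
  by_contra hni
  have h0 : ∫ r in Ioi (0:ℝ), r ^ (-1 - σ) * Real.exp (-(c / r)) = 0 := integral_undef hni
  rw [integral_inv_exp hσ hc] at h0
  have := mul_pos (Real.Gamma_pos_of_pos hσ) (Real.rpow_pos_of_pos hc (-σ))
  linarith

lemma summable_exp_ser {v : ℝ} (hv : 0 < v) :
    Summable fun k : ℕ => Real.exp (-(2 * ((k:ℝ)+1) * v)) := by
  have hq1 : Real.exp (-(2*v)) < 1 := by rw [← Real.exp_zero]; exact Real.exp_lt_exp.mpr (by linarith)
  have hq0 : (0:ℝ) ≤ Real.exp (-(2*v)) := (Real.exp_pos _).le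
  have hterm : ∀ k : ℕ, Real.exp (-(2 * ((k:ℝ)+1) * v)) = Real.exp (-(2*v)) ^ (k+1) := by
    intro k
    rw [← Real.exp_nat_mul]
    congr 1
    push_cast
    ring
  simp_rw [hterm, pow_succ']
  exact (summable_geometric_of_lt_one hq0 hq1).mul_left _

lemma coth_series {v : ℝ} (hv : 0 < v) :
    cothR v - 1 = 2 * ∑' k : ℕ, Real.exp (-(2 * ((k:ℝ)+1) * v)) := by
  have hq1 : Real.exp (-(2*v)) < 1 := by rw [← Real.exp_zero]; exact Real.exp_lt_exp.mpr (by linarith)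
  have hq0 : (0:ℝ) ≤ Real.exp (-(2*v)) := (Real.exp_pos _).le
  have hterm : ∀ k : ℕ, Real.exp (-(2 * ((k:ℝ)+1) * v)) = Real.exp (-(2*v)) ^ (k+1) := by
    intro k
    rw [← Real.exp_nat_mul]
    congr 1
    push_cast
    ring
  have hsum : ∑' k : ℕ, Real.exp (-(2 * ((k:ℝ)+1) * v))
      = Real.exp (-(2*v)) * (1 - Real.exp (-(2*v)))⁻¹ := by
    simp_rw [hterm, pow_succ']
    rw [tsum_mul_left, tsum_geometric_of_lt_one hq0 hq1]
  rw [hsum, cothR]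
  have hden : Real.exp (-v) < Real.exp v := Real.exp_lt_exp.mpr (by linarith)
  have hden' : Real.exp v - Real.exp (-v) ≠ 0 := by linarith
  have hden2 : (1:ℝ) - Real.exp (-(2*v)) ≠ 0 := by linarith
  have hE : Real.exp (-v) * Real.exp v = 1 := by
    rw [← Real.exp_add]
    simp
  have hq : Real.exp (-(2*v)) = Real.exp (-v) ^ 2 := by
    rw [← Real.exp_nat_mul]
    congr 1
    push_cast
    ring
  rw [hq] at hden2 ⊢
  field_simp
  nlinarith [hE, Real.exp_pos v, Real.exp_pos (-v)]

end invint
section zeta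

lemma pnat_tsum_eq (σ : ℝ) :
    ∑' k : ℕ, ((k:ℝ)+1) ^ (-σ) = zetaR σ := by
  rw [zetaR, ← Equiv.pnatEquivNat.symm.tsum_eq (fun k : ℕ+ => (k : ℝ) ^ (-σ))]
  congr 1
  funext k
  have : ((Equiv.pnatEquivNat.symm k : ℕ+) : ℝ) = (k:ℝ) + 1 := by
    simp [Equiv.pnatEquivNat, Nat.succPNat]
  rw [this]

lemma summable_shift (σ : ℝ) (hσ : 1 < σ) :
    Summable fun k : ℕ => ((k:ℝ)+1) ^ (-σ) := by
  have h1 : Summable (fun k : ℕ => ((k:ℕ):ℝ) ^ (-σ)) :=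
    Real.summable_nat_rpow.mpr (by linarith)
  have h2 := (_root_.summable_nat_add_iff (f := fun k : ℕ => ((k:ℕ):ℝ) ^ (-σ)) 1).mpr h1
  refine h2.congr fun k => ?_
  push_cast
  ring_nf

lemma radial_zeta {n : ℕ} (hn : 0 < n) {σ t K : ℝ} (hσ : 1 < σ) (ht : 0 < t) (hK : 0 ≤ K) :
    ∫⁻ r in Ioi (0:ℝ), ENNReal.ofReal (K * r ^ (n-1)) *
      ENNReal.ofReal ((cothR (t / r) - 1) * r ^ (-(n:ℝ) - σ)) =
    ENNReal.ofReal (2 * K * Real.Gamma σ * (2*t) ^ (-σ) * zetaR σ) := by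
  have hσ0 : (0:ℝ) < σ := by linarith
  have hpt : ∀ r, r ∈ Ioi (0:ℝ) →
      ENNReal.ofReal (K * r ^ (n-1)) * ENNReal.ofReal ((cothR (t / r) - 1) * r ^ (-(n:ℝ) - σ))
      = ∑' k : ℕ, ENNReal.ofReal
          ((2*K) * (r ^ (-1 - σ) * Real.exp (-(2*((k:ℝ)+1)*(t/r))))) := by
    intro r hr
    have hr0 : (0:ℝ) < r := hr
    have hv : 0 < t / r := div_pos ht hr0
    rw [← ENNReal.ofReal_mul (mul_nonneg hK (pow_nonneg hr0.le _))]
    have hrr : (r:ℝ)^(n-1) * r^(-(n:ℝ)-σ) = r^(-1-σ) := by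
      rw [← Real.rpow_natCast r (n-1), ← Real.rpow_add hr0, Nat.cast_sub hn]
      congr 1
      push_cast
      ring
    have hc : K * r ^ (n-1) * ((cothR (t / r) - 1) * r ^ (-(n:ℝ) - σ))
        = ∑' k : ℕ, (2*K) * (r ^ (-1 - σ) * Real.exp (-(2*((k:ℝ)+1)*(t/r)))) := by
      rw [coth_series hv]
      have hre : ∀ k : ℕ, (2*K) * (r ^ (-1 - σ) * Real.exp (-(2*((k:ℝ)+1)*(t/r))))
          = ((2*K) * r ^ (-1 - σ)) * Real.exp (-(2*((k:ℝ)+1)*(t/r))) := fun k => by ring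
      simp_rw [hre]
      rw [tsum_mul_left]
      rw [show K * r ^ (n-1) * (2 * (∑' k : ℕ, Real.exp (-(2*((k:ℝ)+1)*(t/r)))) * r ^ (-(n:ℝ)-σ))
          = ((r:ℝ)^(n-1) * r^(-(n:ℝ)-σ)) * (2 * K * ∑' k : ℕ, Real.exp (-(2*((k:ℝ)+1)*(t/r))))
          from by ring, hrr]
      ring
    rw [hc]
    exact ENNReal.ofReal_tsum_of_nonneg
      (fun k => mul_nonneg (by linarith) (mul_nonneg (Real.rpow_nonneg hr0.le _)
        (Real.exp_pos _).le))
      (((summable_exp_ser hv).mul_left _).mul_left _)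
  rw [setLIntegral_congr_fun measurableSet_Ioi hpt]
  have hm : ∀ k : ℕ, Measurable fun r : ℝ =>
      ENNReal.ofReal ((2*K) * (r ^ (-1 - σ) * Real.exp (-(2*((k:ℝ)+1)*(t/r))))) := by
    intro k
    apply Measurable.ennreal_ofReal
    apply Measurable.const_mul
    exact (measurable_id.pow measurable_const).mul
      (((measurable_const.div measurable_id).const_mul (2*((k:ℝ)+1))).neg.exp)
  rw [lintegral_tsum fun k => (hm k).aemeasurable]
  have hterm : ∀ k : ℕ, ∫⁻ r in Ioi (0:ℝ), ENNReal.ofReal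
      ((2*K) * (r ^ (-1 - σ) * Real.exp (-(2*((k:ℝ)+1)*(t/r)))))
      = ENNReal.ofReal ((2*K*Real.Gamma σ*(2*t)^(-σ)) * ((k:ℝ)+1) ^ (-σ)) := by
    intro k
    have hc0 : (0:ℝ) < 2*((k:ℝ)+1)*t := by positivity
    have harg : ∀ r : ℝ, (2*((k:ℝ)+1)*(t/r)) = (2*((k:ℝ)+1)*t) / r := fun r => by
      rw [mul_div_assoc]
    simp_rw [harg]
    rw [← ofReal_integral_eq_lintegral_ofReal
      ((integrableOn_inv_exp hσ0 hc0).const_mul (2*K))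
      (by filter_upwards [ae_restrict_mem measurableSet_Ioi] with r hr
          exact mul_nonneg (by linarith) (mul_nonneg (Real.rpow_nonneg (le_of_lt hr) _)
            (Real.exp_pos _).le)),
      MeasureTheory.integral_const_mul, integral_inv_exp hσ0 hc0]
    congr 1
    rw [show 2*((k:ℝ)+1)*t = (2*t)*((k:ℝ)+1) from by ring,
      Real.mul_rpow (by positivity) (by positivity)]
    ring
  simp_rw [hterm]
  rw [← ENNReal.ofReal_tsum_of_nonneg
    (fun k => mul_nonneg (mul_nonneg (mul_nonneg (by linarith : (0:ℝ) ≤ 2*K)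
      (Real.Gamma_pos_of_pos hσ0).le) (Real.rpow_nonneg (by positivity) _))
      (Real.rpow_nonneg (by positivity) _))
    ((summable_shift σ hσ).mul_left _), tsum_mul_left, pnat_tsum_eq]

end zeta
theorem stmt_9 (m n : ℕ) (hm : 0 < m) (hn : 0 < n) (α β σ : ℝ)
    (hα : 0 < α) (hβ : 0 < β) (hσ : 1 < σ)
    (x : Fin m → ℝ) (hx : ∀ i, 0 < x i) :
    pnorm α x ^ σ *
        ∫ y in {y : Fin n → ℝ | ∀ i, 0 < y i},
          (cothR (pnorm α x / pnorm β y) - 1) * pnorm β y ^ (-(n : ℝ) - σ) =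
      Real.Gamma (1 / β) ^ n / (β ^ (n - 1) * Real.Gamma (n / β)) *
        (Real.Gamma σ / 2 ^ (σ - 1)) * zetaR σ := by
  have ht : 0 < pnorm α x := pnorm_pos_s9 hα hm hx
  set t := pnorm α x with htdef
  set K := (n:ℝ) * (unitVol n β).toReal with hKdef
  have hK0 : 0 ≤ K := mul_nonneg (Nat.cast_nonneg n) ENNReal.toReal_nonneg
  have hσ0 : (0:ℝ) < σ := by linarith
  have hΓσ : 0 < Real.Gamma σ := Real.Gamma_pos_of_pos hσ0
  have hζ0 : 0 ≤ zetaR σ := tsum_nonneg fun k => Real.rpow_nonneg (by positivity) _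
  have hcoth : Measurable cothR := by
    unfold cothR
    exact (Real.measurable_exp.add (Real.measurable_exp.comp measurable_neg)).div
      (Real.measurable_exp.sub (Real.measurable_exp.comp measurable_neg))
  have hgmeas : Measurable fun y : Fin n → ℝ =>
      (cothR (t / pnorm β y) - 1) * pnorm β y ^ (-(n:ℝ) - σ) :=
    ((hcoth.comp (measurable_const.div (measurable_pnorm_s9 hβ))).sub measurable_const).mul
      ((measurable_pnorm_s9 hβ).pow measurable_const)
  have hnn : 0 ≤ᵐ[volume.restrict {y : Fin n → ℝ | ∀ i, 0 < y i}]
      fun y => (cothR (t / pnorm β y) - 1) * pnorm β y ^ (-(n:ℝ) - σ) := by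
    filter_upwards [ae_restrict_mem measurableSet_orthant] with y hy
    have hp : 0 < pnorm β y := pnorm_pos_s9 hβ hn hy
    have hv : 0 < t / pnorm β y := div_pos ht hp
    have h1 : 0 ≤ cothR (t / pnorm β y) - 1 := by
      rw [coth_series hv]
      exact mul_nonneg (by norm_num) (tsum_nonneg fun k => (Real.exp_pos _).le)
    exact mul_nonneg h1 (Real.rpow_nonneg hp.le _)
  rw [integral_eq_lintegral_of_nonneg_ae hnn hgmeas.aestronglyMeasurable]
  have hf : Measurable fun r : ℝ =>
      ENNReal.ofReal ((cothR (t / r) - 1) * r ^ (-(n:ℝ) - σ)) :=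
    (((hcoth.comp (measurable_const.div measurable_id)).sub measurable_const).mul
      (measurable_id.pow measurable_const)).ennreal_ofReal
  have h1 : (∫⁻ y in {y : Fin n → ℝ | ∀ i, 0 < y i},
      ENNReal.ofReal ((cothR (t / pnorm β y) - 1) * pnorm β y ^ (-(n:ℝ) - σ)))
      = ∫⁻ r in Ioi (0:ℝ), ENNReal.ofReal (K * r ^ (n-1)) *
          ENNReal.ofReal ((cothR (t / r) - 1) * r ^ (-(n:ℝ) - σ)) :=
    lintegral_orthant hβ hn _ hf
  rw [h1, radial_zeta hn hσ ht hK0, ENNReal.toReal_ofReal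
    (mul_nonneg (mul_nonneg (mul_nonneg (mul_nonneg zero_le_two hK0) hΓσ.le)
      (Real.rpow_nonneg (by positivity) _)) hζ0)]
  have hKval : K = Real.Gamma (1/β)^n / (β^(n-1) * Real.Gamma ((n:ℝ)/β)) := K_eq hβ hn
  rw [← hKval]
  have e1 : ((2*t):ℝ)^(-σ) = (2:ℝ)^(-σ) * t^(-σ) := Real.mul_rpow (by norm_num) ht.le
  have e2 : t^σ * t^(-σ) = 1 := by
    rw [← Real.rpow_add ht]
    simp
  have e4 : (2:ℝ)^(-σ) * 2^(σ-1) = 2⁻¹ := by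
    rw [← Real.rpow_add two_pos, show -σ+(σ-1) = (-1:ℝ) by ring, Real.rpow_neg_one]
  have h2ne : ((2:ℝ)^(σ-1)) ≠ 0 := (Real.rpow_pos_of_pos two_pos _).ne'
  rw [e1]
  have key2 : t^σ * (2*K*Real.Gamma σ*((2:ℝ)^(-σ) * t^(-σ))*zetaR σ) * 2^(σ-1)
      = K*Real.Gamma σ*zetaR σ := by
    calc t^σ * (2*K*Real.Gamma σ*((2:ℝ)^(-σ)*t^(-σ))*zetaR σ) * 2^(σ-1)
        = (K*Real.Gamma σ*zetaR σ) * ((t^σ*t^(-σ)) * (((2:ℝ)^(-σ)*2^(σ-1)) * 2)) := by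
          ring
      _ = K*Real.Gamma σ*zetaR σ := by
          rw [e2, e4]
          norm_num
  rw [eq_div_of_mul_eq h2ne key2]
  ring
end

section
/- Let p > 1, 1/p + 1/q = 1, σ > 1, and let f, g : (0,∞) → [0,∞) be measurable with 0 < ∫₀^∞ x^{p(1−σ)−1} f(x)^p dx < ∞ and 0 < ∫₀^∞ y^{q(1+σ)−1} g(y)^q dy < ∞. Then ∫₀^∞∫₀^∞ (coth(x/y) − 1) f(x) g(y) dx dy < (Γ(σ)/2^{σ−1}) ζ(σ) · (∫₀^∞ x^{p(1−σ)−1} f(x)^p dx)^{1/p} (∫₀^∞ y^{q(1+σ)−1} g(y)^q dy)^{1/q}. -/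
open MeasureTheory Real Set

namespace Stmt11

noncomputable def K (t : ℝ) : ℝ := cothR t - 1

lemma exp_neg_two_lt_one {t : ℝ} (ht : 0 < t) : Real.exp (-(2*t)) < 1 :=
  Real.exp_lt_one_iff.mpr (by linarith)

lemma K_eq {t : ℝ} (ht : 0 < t) :
    K t = 2 * Real.exp (-(2*t)) / (1 - Real.exp (-(2*t))) := by
  have h1 : Real.exp (-t) < Real.exp t := Real.exp_lt_exp.mpr (by linarith)
  have h2 : Real.exp t - Real.exp (-t) ≠ 0 := by linarith
  have h3 : 1 - Real.exp (-(2*t)) ≠ 0 := by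
    have := exp_neg_two_lt_one ht; linarith
  have h4 : Real.exp (-(2*t)) = Real.exp (-t) * Real.exp (-t) := by
    rw [← Real.exp_add]; ring_nf
  have h5 : Real.exp t * Real.exp (-t) = 1 := by
    rw [← Real.exp_add]; simp
  have hb := Real.exp_ne_zero (-t)
  have key : 1 - Real.exp (-(2*t)) = Real.exp (-t) * (Real.exp t - Real.exp (-t)) := by
    rw [h4, mul_sub]
    rw [show Real.exp (-t) * Real.exp t = 1 by rw [← Real.exp_add]; simp]
  rw [K, cothR, div_sub_one h2,
    show Real.exp t + Real.exp (-t) - (Real.exp t - Real.exp (-t)) = 2 * Real.exp (-t) by ring,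
    key, h4, show 2 * (Real.exp (-t) * Real.exp (-t)) = Real.exp (-t) * (2 * Real.exp (-t)) by ring,
    mul_div_mul_left _ _ hb]

lemma K_pos {t : ℝ} (ht : 0 < t) : 0 < K t := by
  rw [K_eq ht]
  have h1 := exp_neg_two_lt_one ht
  have h2 := Real.exp_pos (-(2*t))
  exact div_pos (by linarith) (by linarith)

@[measurability, fun_prop]
lemma measurable_K : Measurable K := by
  unfold K cothR
  fun_prop

lemma K_series {t : ℝ} (ht : 0 < t) :
    K t = ∑' k : ℕ+, 2 * Real.exp (-(2 * (k:ℝ) * t)) := by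
  set r := Real.exp (-(2*t)) with hr
  have hr0 : 0 < r := Real.exp_pos _
  have hr1 : r < 1 := exp_neg_two_lt_one ht
  have hterm : ∀ k : ℕ+, 2 * Real.exp (-(2 * (k:ℝ) * t)) = 2 * r ^ (k:ℕ) := by
    intro k
    rw [hr, ← Real.exp_nat_mul]
    ring_nf
  calc K t = 2 * r / (1 - r) := K_eq ht
    _ = ∑' n : ℕ, (2*r) * r ^ n := by
        rw [tsum_mul_left, tsum_geometric_of_lt_one hr0.le hr1]; ring
    _ = ∑' n : ℕ, 2 * r ^ ((Equiv.pnatEquivNat.symm n : ℕ+) : ℕ) := by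
        refine tsum_congr fun n => ?_
        have : ((Equiv.pnatEquivNat.symm n : ℕ+) : ℕ) = n + 1 := rfl
        rw [this, pow_succ]; ring
    _ = ∑' k : ℕ+, 2 * r ^ (k:ℕ) := Equiv.pnatEquivNat.symm.tsum_eq (fun k : ℕ+ => 2 * r ^ (k:ℕ))
    _ = ∑' k : ℕ+, 2 * Real.exp (-(2 * (k:ℝ) * t)) := by
        exact tsum_congr fun k => (hterm k).symm

noncomputable def Cst (σ : ℝ) : ℝ := Real.Gamma σ / 2 ^ (σ-1) * zetaR σ

lemma summable_zeta {σ : ℝ} (hσ : 1 < σ) :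
    Summable (fun k : ℕ+ => ((k:ℕ):ℝ) ^ (-σ)) := by
  have S : Summable (fun n : ℕ => (n:ℝ) ^ (-σ)) :=
    Real.summable_nat_rpow.mpr (by linarith)
  exact S.comp_injective PNat.coe_injective

lemma zetaR_pos {σ : ℝ} (hσ : 1 < σ) : 0 < zetaR σ := by
  rw [zetaR]
  refine Summable.tsum_pos (summable_zeta hσ) (fun k => Real.rpow_nonneg (by positivity) _) 1 ?_
  norm_num

lemma Cst_pos {σ : ℝ} (hσ : 1 < σ) : 0 < Cst σ := by
  have h1 : 0 < Real.Gamma σ := Real.Gamma_pos_of_pos (by linarith)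
  have h2 : (0:ℝ) < 2 ^ (σ-1) := Real.rpow_pos_of_pos (by norm_num) _
  have := zetaR_pos hσ
  rw [Cst]; positivity

lemma term_eq {σ : ℝ} (k : ℕ+) :
    2 * ((1 / (2*((k:ℕ):ℝ))) ^ σ * Real.Gamma σ)
      = (2 * Real.Gamma σ * (1/2) ^ σ) * ((k:ℕ):ℝ) ^ (-σ) := by
  have hk : (0:ℝ) < ((k:ℕ):ℝ) := by exact_mod_cast k.pos
  rw [show (1 / (2*((k:ℕ):ℝ))) = (1/2) * ((k:ℕ):ℝ)⁻¹ by field_simp,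
    Real.mul_rpow (by norm_num) (by positivity), ← Real.rpow_neg_one ((k:ℕ):ℝ),
    ← Real.rpow_mul hk.le]
  norm_num
  ring

lemma sum_C {σ : ℝ} (hσ : 1 < σ) :
    ∑' k : ℕ+, 2 * ((1 / (2*((k:ℕ):ℝ))) ^ σ * Real.Gamma σ) = Cst σ := by
  have : ∀ k : ℕ+, 2 * ((1 / (2*((k:ℕ):ℝ))) ^ σ * Real.Gamma σ)
      = (2 * Real.Gamma σ * (1/2) ^ σ) * ((k:ℕ):ℝ) ^ (-σ) := term_eq
  rw [tsum_congr this, tsum_mul_left, Cst, zetaR]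
  have h2 : ((2:ℝ)) ^ (σ-1) ≠ 0 := (Real.rpow_pos_of_pos (by norm_num) _).ne'
  have key : 2 * Real.Gamma σ * (1/2) ^ σ = Real.Gamma σ / 2 ^ (σ-1) := by
    rw [show ((1:ℝ)/2) = 2⁻¹ by norm_num, Real.inv_rpow (by norm_num),
      Real.rpow_sub (by norm_num : (0:ℝ) < 2), Real.rpow_one] at *
    field_simp
  rw [key]

lemma summable_C {σ : ℝ} (hσ : 1 < σ) :
    Summable (fun k : ℕ+ => 2 * ((1 / (2*((k:ℕ):ℝ))) ^ σ * Real.Gamma σ)) := by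
  have := ((summable_zeta hσ).mul_left (2 * Real.Gamma σ * (1/2) ^ σ))
  exact this.congr fun k => (term_eq k).symm
lemma gamma_piece {σ : ℝ} (hσ : 1 < σ) (k : ℕ+) :
    ∫⁻ u in Ioi (0:ℝ), ENNReal.ofReal (2 * Real.exp (-(2 * ((k:ℕ):ℝ) * u)) * u ^ (σ-1))
      = ENNReal.ofReal (2 * ((1 / (2*((k:ℕ):ℝ))) ^ σ * Real.Gamma σ)) := by
  have hk : (0:ℝ) < 2*((k:ℕ):ℝ) := by positivity
  have hint : IntegrableOn (fun u : ℝ => 2 * Real.exp (-(2 * ((k:ℕ):ℝ) * u)) * u ^ (σ-1))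
      (Ioi 0) := by
    have base : IntegrableOn (fun u : ℝ => u ^ (σ-1) * Real.exp (-(2*((k:ℕ):ℝ)) * u ^ (1:ℝ)))
        (Ioi 0) := integrableOn_rpow_mul_exp_neg_mul_rpow (by linarith) one_pos hk
    have : IntegrableOn (fun u : ℝ => (2:ℝ) * (u ^ (σ-1) * Real.exp (-(2*((k:ℕ):ℝ)) * u ^ (1:ℝ))))
        (Ioi 0) := base.const_mul 2
    refine this.congr_fun (fun u hu => ?_) measurableSet_Ioi
    beta_reduce
    rw [Real.rpow_one]
    ring_nf
  have hval : ∫ u in Ioi (0:ℝ), 2 * Real.exp (-(2 * ((k:ℕ):ℝ) * u)) * u ^ (σ-1)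
      = 2 * ((1 / (2*((k:ℕ):ℝ))) ^ σ * Real.Gamma σ) := by
    have := Real.integral_rpow_mul_exp_neg_mul_Ioi (by linarith : (0:ℝ) < σ) hk
    rw [← this, ← integral_const_mul]
    refine setIntegral_congr_fun measurableSet_Ioi (fun u hu => ?_)
    ring_nf
  rw [← hval]
  rw [← ofReal_integral_eq_lintegral_ofReal hint]
  filter_upwards [ae_restrict_mem measurableSet_Ioi] with u hu
  have : (0:ℝ) < u := hu
  positivity

lemma lint_K {σ : ℝ} (hσ : 1 < σ) :
    ∫⁻ u in Ioi (0:ℝ), ENNReal.ofReal (K u * u ^ (σ-1)) = ENNReal.ofReal (Cst σ) := by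
  have step1 : ∫⁻ u in Ioi (0:ℝ), ENNReal.ofReal (K u * u ^ (σ-1))
      = ∫⁻ u in Ioi (0:ℝ), ∑' k : ℕ+,
          ENNReal.ofReal (2 * Real.exp (-(2 * ((k:ℕ):ℝ) * u)) * u ^ (σ-1)) := by
    refine setLIntegral_congr_fun measurableSet_Ioi ?_
    intro u hu
    have hu' : (0:ℝ) < u := hu
    beta_reduce
    have hsum : Summable (fun k : ℕ+ => 2 * Real.exp (-(2 * ((k:ℕ):ℝ) * u)) * u ^ (σ-1)) := by
      have hr1 : Real.exp (-(2*u)) < 1 := exp_neg_two_lt_one hu'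
      have hgeom : Summable (fun n : ℕ => Real.exp (-(2*u)) ^ n) :=
        summable_geometric_of_lt_one (Real.exp_pos _).le hr1
      have h2 : Summable (fun k : ℕ+ => Real.exp (-(2*u)) ^ (k:ℕ)) :=
        hgeom.comp_injective PNat.coe_injective
      refine ((h2.mul_left 2).mul_right (u ^ (σ-1))).congr fun k => ?_
      rw [← Real.exp_nat_mul]
      ring_nf
    rw [K_series hu', ← tsum_mul_right,
      ENNReal.ofReal_tsum_of_nonneg (fun k => by positivity) hsum]
  rw [step1, lintegral_tsum (fun k => by fun_prop)]
  have : ∀ k : ℕ+, ∫⁻ u in Ioi (0:ℝ),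
      ENNReal.ofReal (2 * Real.exp (-(2 * ((k:ℕ):ℝ) * u)) * u ^ (σ-1))
      = ENNReal.ofReal (2 * ((1 / (2*((k:ℕ):ℝ))) ^ σ * Real.Gamma σ)) := gamma_piece hσ
  rw [tsum_congr this, ← ENNReal.ofReal_tsum_of_nonneg
    (fun k => by positivity) (summable_C hσ), sum_C hσ]
open scoped ENNReal NNReal
lemma lint_cov {s : Set ℝ} (hs : MeasurableSet s) {f f' : ℝ → ℝ}
    (hf' : ∀ x ∈ s, HasDerivWithinAt f (f' x) s x) (hinj : InjOn f s) (g : ℝ → ℝ≥0∞) :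
    ∫⁻ x in f '' s, g x = ∫⁻ x in s, ENNReal.ofReal |f' x| * g (f x) := by
  simpa only [ContinuousLinearMap.det_toSpanSingleton] using
    lintegral_image_eq_lintegral_abs_det_fderiv_mul volume hs
      (fun x hx => (hf' x hx).hasFDerivWithinAt) hinj g

lemma image_inv_Ioi {x : ℝ} (hx : 0 < x) : (fun u : ℝ => x * u⁻¹) '' Ioi 0 = Ioi 0 := by
  ext y
  constructor
  · rintro ⟨u, hu, rfl⟩
    have : (0:ℝ) < u := hu
    exact mul_pos hx (by positivity)
  · intro hy
    have hy' : (0:ℝ) < y := hy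
    exact ⟨x / y, div_pos hx hy', by field_simp⟩

lemma image_mul_Ioi {y : ℝ} (hy : 0 < y) : (fun u : ℝ => y * u) '' Ioi 0 = Ioi 0 := by
  ext z
  constructor
  · rintro ⟨u, hu, rfl⟩
    exact mul_pos hy hu
  · intro hz
    have hz' : (0:ℝ) < z := hz
    exact ⟨z / y, div_pos hz' hy, by field_simp⟩

lemma lint_sub_inv {x : ℝ} (hx : 0 < x) (Ψ : ℝ → ℝ≥0∞) :
    ∫⁻ y in Ioi (0:ℝ), Ψ y = ∫⁻ u in Ioi (0:ℝ), ENNReal.ofReal (x / u^2) * Ψ (x / u) := by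
  have hder : ∀ u ∈ Ioi (0:ℝ), HasDerivWithinAt (fun u : ℝ => x * u⁻¹) (-(x / u^2)) (Ioi 0) u := by
    intro u hu
    have hu' : (u:ℝ) ≠ 0 := ne_of_gt hu
    have h := ((hasDerivAt_inv hu').const_mul x).hasDerivWithinAt (s := Ioi 0)
    rw [show -(x / u^2) = x * -(u^2)⁻¹ by ring]
    exact h
  have hinj : InjOn (fun u : ℝ => x * u⁻¹) (Ioi 0) := by
    intro a ha b hb hab
    simp only at hab
    exact inv_injective (mul_left_cancel₀ (ne_of_gt hx) hab)
  have h := lint_cov measurableSet_Ioi hder hinj Ψ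
  rw [image_inv_Ioi hx] at h
  rw [h]
  refine setLIntegral_congr_fun measurableSet_Ioi ?_
  intro u hu
  have hu' : (0:ℝ) < u := hu
  beta_reduce
  rw [abs_neg, abs_of_pos (by positivity), ← div_eq_mul_inv]

lemma lint_sub_mul {y : ℝ} (hy : 0 < y) (Ψ : ℝ → ℝ≥0∞) :
    ∫⁻ x in Ioi (0:ℝ), Ψ x = ∫⁻ u in Ioi (0:ℝ), ENNReal.ofReal y * Ψ (y * u) := by
  have hder : ∀ u ∈ Ioi (0:ℝ), HasDerivWithinAt (fun u : ℝ => y * u) y (Ioi 0) u := by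
    intro u hu
    simpa using ((hasDerivAt_id u).const_mul y).hasDerivWithinAt (s := Ioi 0)
  have hinj : InjOn (fun u : ℝ => y * u) (Ioi 0) := fun a _ b _ hab =>
    mul_left_cancel₀ (ne_of_gt hy) hab
  have h := lint_cov measurableSet_Ioi hder hinj Ψ
  rw [image_mul_Ioi hy] at h
  rw [h, abs_of_pos hy]

lemma lintW {σ : ℝ} (hσ : 1 < σ) {x : ℝ} (hx : 0 < x) :
    ∫⁻ y in Ioi (0:ℝ), ENNReal.ofReal (K (x/y) * y ^ (-σ-1))
      = ENNReal.ofReal (x ^ (-σ)) * ENNReal.ofReal (Cst σ) := by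
  rw [lint_sub_inv hx (fun y => ENNReal.ofReal (K (x/y) * y ^ (-σ-1)))]
  have step : ∀ u ∈ Ioi (0:ℝ), ENNReal.ofReal (x / u^2)
        * ENNReal.ofReal (K (x/(x/u)) * (x/u) ^ (-σ-1))
      = ENNReal.ofReal (x ^ (-σ)) * ENNReal.ofReal (K u * u ^ (σ-1)) := by
    intro u hu
    have hu' : (0:ℝ) < u := hu
    have harg : x/(x/u) = u := by field_simp
    have hKpos : 0 ≤ K u := (K_pos hu').le
    rw [harg, ← ENNReal.ofReal_mul (by positivity), ← ENNReal.ofReal_mul (by positivity)]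
    congr 1
    have hrp : (x/u) ^ (-σ-1) = x ^ (-σ-1) / u ^ (-σ-1) :=
      Real.div_rpow hx.le hu'.le _
    have hx1 : x * x ^ (-σ-1) = x ^ (-σ) := by
      rw [show (-σ:ℝ) = 1 + (-σ-1) by ring, Real.rpow_add hx, Real.rpow_one]
      norm_num
    have hu2 : (u:ℝ)^2 * u ^ (-σ-1) = u ^ (1-σ) := by
      rw [show (1-σ:ℝ) = ((2:ℕ):ℝ) + (-σ-1) by push_cast; ring, Real.rpow_add hu',
        Real.rpow_natCast]
    have hu3 : u ^ (σ-1) * u ^ (1-σ) = 1 := by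
      rw [← Real.rpow_add hu']
      norm_num
    have halg : x / u^2 * (x/u) ^ (-σ-1) = x ^ (-σ) * u ^ (σ-1) := by
      rw [hrp, div_mul_div_comm, hx1, hu2, div_eq_mul_inv, ← Real.rpow_neg hu'.le]
      norm_num
    linear_combination (K u) * halg
  rw [setLIntegral_congr_fun measurableSet_Ioi (by intro u hu; exact step u hu),
    lintegral_const_mul' _ _ ENNReal.ofReal_ne_top, lint_K hσ]

lemma lintV {σ : ℝ} (hσ : 1 < σ) {y : ℝ} (hy : 0 < y) :
    ∫⁻ x in Ioi (0:ℝ), ENNReal.ofReal (K (x/y) * x ^ (σ-1))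
      = ENNReal.ofReal (y ^ σ) * ENNReal.ofReal (Cst σ) := by
  rw [lint_sub_mul hy (fun x => ENNReal.ofReal (K (x/y) * x ^ (σ-1)))]
  have step : ∀ u ∈ Ioi (0:ℝ), ENNReal.ofReal y
        * ENNReal.ofReal (K (y*u/y) * (y*u) ^ (σ-1))
      = ENNReal.ofReal (y ^ σ) * ENNReal.ofReal (K u * u ^ (σ-1)) := by
    intro u hu
    have hu' : (0:ℝ) < u := hu
    have harg : y*u/y = u := by field_simp
    have hKpos : 0 ≤ K u := (K_pos hu').le
    rw [harg, ← ENNReal.ofReal_mul hy.le, ← ENNReal.ofReal_mul (by positivity)]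
    congr 1
    have hrp : (y*u) ^ (σ-1) = y ^ (σ-1) * u ^ (σ-1) := Real.mul_rpow hy.le hu'.le
    have hy1 : y * y ^ (σ-1) = y ^ σ := by
      rw [show (σ:ℝ) = 1 + (σ-1) by ring, Real.rpow_add hy, Real.rpow_one]
      norm_num
    have halg : y * (y*u) ^ (σ-1) = y ^ σ * u ^ (σ-1) := by
      rw [hrp, ← mul_assoc, hy1]
    linear_combination (K u) * halg
  rw [setLIntegral_congr_fun measurableSet_Ioi (by intro u hu; exact step u hu),
    lintegral_const_mul' _ _ ENNReal.ofReal_ne_top, lint_K hσ]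
lemma young_strict {p q a b : ℝ} (hpq : Real.HolderConjugate p q)
    (ha : 0 ≤ a) (hb : 0 ≤ b) (heq : a * b = a ^ p / p + b ^ q / q) :
    a ^ p = b ^ q := by
  by_contra hne
  set X := a ^ p with hX
  set Y := b ^ q with hY
  have hX0 : 0 ≤ X := Real.rpow_nonneg ha _
  have hY0 : 0 ≤ Y := Real.rpow_nonneg hb _
  have hab : a * b = X ^ (1/p) * Y ^ (1/q) := by
    rw [hX, hY, ← Real.rpow_mul ha, ← Real.rpow_mul hb,
      mul_one_div_cancel hpq.ne_zero, mul_one_div_cancel hpq.symm.ne_zero,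
      Real.rpow_one, Real.rpow_one]
  have hlt : X ^ (1/p) * Y ^ (1/q) < X / p + Y / q := by
    rcases eq_or_lt_of_le hX0 with hX0' | hXpos
    · rcases eq_or_lt_of_le hY0 with hY0' | hYpos
      · exact absurd (hY0'.symm.trans hX0') (Ne.symm hne)
      · rw [← hX0', Real.zero_rpow hpq.one_div_ne_zero, zero_mul, zero_div, zero_add]
        exact div_pos hYpos hpq.symm.pos
    · rcases eq_or_lt_of_le hY0 with hY0' | hYpos
      · rw [← hY0', Real.zero_rpow hpq.symm.one_div_ne_zero, mul_zero, zero_div, add_zero]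
        exact div_pos hXpos hpq.pos
      · have hlog : Real.log X ≠ Real.log Y := by
          intro h
          exact hne (Real.log_injOn_pos (mem_Ioi.mpr hXpos) (mem_Ioi.mpr hYpos) h)
        have hc := strictConvexOn_exp.2 (mem_univ (Real.log X)) (mem_univ (Real.log Y))
          hlog hpq.one_div_pos hpq.symm.one_div_pos
          (by simpa [one_div] using hpq.inv_add_inv_eq_one)
        rw [smul_eq_mul, smul_eq_mul, smul_eq_mul, smul_eq_mul, Real.exp_add] at hc
        rw [Real.exp_log hXpos, Real.exp_log hYpos] at hc
        calc X ^ (1/p) * Y ^ (1/q)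
            = Real.exp (1/p * Real.log X) * Real.exp (1/q * Real.log Y) := by
              rw [Real.rpow_def_of_pos hXpos, Real.rpow_def_of_pos hYpos, mul_comm (Real.log X),
                mul_comm (Real.log Y)]
          _ < 1/p * X + 1/q * Y := hc
          _ = X / p + Y / q := by ring
  rw [hab] at heq
  rw [heq] at hlt
  exact lt_irrefl _ hlt
lemma key (p q σ : ℝ) (hp : 1 < p) (hpq : 1 / p + 1 / q = 1) (hσ : 1 < σ)
    (f g : ℝ → ℝ) (hf : Measurable f) (hg : Measurable g)
    (hf0 : ∀ x, 0 ≤ f x) (hg0 : ∀ y, 0 ≤ g y)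
    (hfi : IntegrableOn (fun x => x ^ (p * (1 - σ) - 1) * f x ^ p) (Ioi 0) volume)
    (hgi : IntegrableOn (fun y => y ^ (q * (1 + σ) - 1) * g y ^ q) (Ioi 0) volume)
    (hA : ∫ x in Ioi (0:ℝ), x ^ (p * (1 - σ) - 1) * f x ^ p = 1)
    (hB : ∫ y in Ioi (0:ℝ), y ^ (q * (1 + σ) - 1) * g y ^ q = 1) :
    ∫ y in Ioi (0:ℝ), ∫ x in Ioi (0:ℝ), (cothR (x / y) - 1) * f x * g y < Cst σ := by
  have conj : Real.HolderConjugate p q := Real.holderConjugate_iff.mpr ⟨hp, by rw [← one_div, ← one_div]; exact hpq⟩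
  have hp0 : 0 < p := conj.pos
  have hq0 : 0 < q := conj.symm.pos
  have hq : 1 < q := conj.symm.lt
  set F : ℝ → ℝ → ℝ := fun x y =>
    K (x/y) ^ (1/p) * x ^ ((1-σ)/q) * y ^ ((-σ-1)/p) * f x with hF
  set G : ℝ → ℝ → ℝ := fun x y =>
    K (x/y) ^ (1/q) * x ^ ((σ-1)/q) * y ^ ((1+σ)/p) * g y with hG
  have hF0 : ∀ x y, 0 < x → 0 < y → 0 ≤ F x y := fun x y hx hy =>
    mul_nonneg (mul_nonneg (mul_nonneg (Real.rpow_nonneg (K_pos (div_pos hx hy)).le _)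
      (Real.rpow_nonneg hx.le _)) (Real.rpow_nonneg hy.le _)) (hf0 x)
  have hG0 : ∀ x y, 0 < x → 0 < y → 0 ≤ G x y := fun x y hx hy =>
    mul_nonneg (mul_nonneg (mul_nonneg (Real.rpow_nonneg (K_pos (div_pos hx hy)).le _)
      (Real.rpow_nonneg hx.le _)) (Real.rpow_nonneg hy.le _)) (hg0 y)
  have pFG : ∀ x y, 0 < x → 0 < y → F x y * G x y = K (x/y) * f x * g y := by
    intro x y hx hy
    have hK := K_pos (div_pos hx hy)
    have e1 : K (x/y) ^ (1/p) * K (x/y) ^ (1/q) = K (x/y) := by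
      rw [← Real.rpow_add hK, hpq, Real.rpow_one]
    have e2 : x ^ ((1-σ)/q) * x ^ ((σ-1)/q) = 1 := by
      rw [← Real.rpow_add hx, show (1-σ)/q + (σ-1)/q = 0 by ring, Real.rpow_zero]
    have e3 : y ^ ((-σ-1)/p) * y ^ ((1+σ)/p) = 1 := by
      rw [← Real.rpow_add hy, show (-σ-1)/p + (1+σ)/p = 0 by ring, Real.rpow_zero]
    calc F x y * G x y
        = (K (x/y) ^ (1/p) * K (x/y) ^ (1/q)) * ((x ^ ((1-σ)/q) * x ^ ((σ-1)/q))
            * ((y ^ ((-σ-1)/p) * y ^ ((1+σ)/p)) * (f x * g y))) := by rw [hF, hG]; ring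
      _ = K (x/y) * f x * g y := by rw [e1, e2, e3]; ring
  have pFp : ∀ x y, 0 < x → 0 < y →
      F x y ^ p = (x ^ (p*(1-σ)/q) * f x ^ p) * (K (x/y) * y ^ (-σ-1)) := by
    intro x y hx hy
    have hK := K_pos (div_pos hx hy)
    have n1 : 0 ≤ K (x/y) ^ (1/p) := Real.rpow_nonneg hK.le _
    have n2 : 0 ≤ x ^ ((1-σ)/q) := Real.rpow_nonneg hx.le _
    have n3 : 0 ≤ y ^ ((-σ-1)/p) := Real.rpow_nonneg hy.le _
    rw [hF]
    rw [Real.mul_rpow (mul_nonneg (mul_nonneg n1 n2) n3) (hf0 x),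
      Real.mul_rpow (mul_nonneg n1 n2) n3, Real.mul_rpow n1 n2,
      ← Real.rpow_mul hK.le, ← Real.rpow_mul hx.le, ← Real.rpow_mul hy.le,
      one_div_mul_cancel hp0.ne', Real.rpow_one,
      div_mul_cancel₀ _ hp0.ne',
      show (1-σ)/q*p = p*(1-σ)/q by ring]
    ring
  have pGq : ∀ x y, 0 < x → 0 < y →
      G x y ^ q = (y ^ (q*(1+σ)/p) * g y ^ q) * (K (x/y) * x ^ (σ-1)) := by
    intro x y hx hy
    have hK := K_pos (div_pos hx hy)
    have n1 : 0 ≤ K (x/y) ^ (1/q) := Real.rpow_nonneg hK.le _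
    have n2 : 0 ≤ x ^ ((σ-1)/q) := Real.rpow_nonneg hx.le _
    have n3 : 0 ≤ y ^ ((1+σ)/p) := Real.rpow_nonneg hy.le _
    rw [hG]
    rw [Real.mul_rpow (mul_nonneg (mul_nonneg n1 n2) n3) (hg0 y),
      Real.mul_rpow (mul_nonneg n1 n2) n3, Real.mul_rpow n1 n2,
      ← Real.rpow_mul hK.le, ← Real.rpow_mul hx.le, ← Real.rpow_mul hy.le,
      one_div_mul_cancel hq0.ne', Real.rpow_one,
      div_mul_cancel₀ _ hq0.ne',
      show (1+σ)/p*q = q*(1+σ)/p by ring]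
    ring
  -- measurability
  have mK2 : Measurable fun z : ℝ × ℝ => K (z.1 / z.2) :=
    measurable_K.comp (measurable_fst.div measurable_snd)
  have mF2 : Measurable fun z : ℝ × ℝ => F z.1 z.2 := by
    rw [hF]; fun_prop
  have mG2 : Measurable fun z : ℝ × ℝ => G z.1 z.2 := by
    rw [hG]; fun_prop
  have mProd : Measurable fun z : ℝ × ℝ => K (z.1/z.2) * f z.1 * g z.2 :=
    (mK2.mul (hf.comp measurable_fst)).mul (hg.comp measurable_snd)
  have mFp2 : Measurable fun z : ℝ × ℝ => F z.1 z.2 ^ p := by fun_prop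
  have mGq2 : Measurable fun z : ℝ × ℝ => G z.1 z.2 ^ q := by fun_prop
  have mH2 : Measurable fun z : ℝ × ℝ =>
      F z.1 z.2 ^ p / p + G z.1 z.2 ^ q / q - F z.1 z.2 * G z.1 z.2 :=
    ((mFp2.div_const p).add (mGq2.div_const q)).sub (mF2.mul mG2)
  -- lintegral quantities
  set Φ : ℝ → ℝ → ℝ≥0∞ := fun x y => ENNReal.ofReal (K (x/y) * f x * g y) with hΦ
  set ΦP : ℝ → ℝ → ℝ≥0∞ := fun x y => ENNReal.ofReal (F x y ^ p) with hΦP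
  set ΦQ : ℝ → ℝ → ℝ≥0∞ := fun x y => ENNReal.ofReal (G x y ^ q) with hΦQ
  set ΦH : ℝ → ℝ → ℝ≥0∞ := fun x y =>
    ENNReal.ofReal (F x y ^ p / p + G x y ^ q / q - F x y * G x y) with hΦH
  set L : ℝ≥0∞ := ∫⁻ y in Ioi (0:ℝ), ∫⁻ x in Ioi (0:ℝ), Φ x y with hL
  set LP : ℝ≥0∞ := ∫⁻ y in Ioi (0:ℝ), ∫⁻ x in Ioi (0:ℝ), ΦP x y with hLP
  set LQ : ℝ≥0∞ := ∫⁻ y in Ioi (0:ℝ), ∫⁻ x in Ioi (0:ℝ), ΦQ x y with hLQ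
  set H : ℝ≥0∞ := ∫⁻ y in Ioi (0:ℝ), ∫⁻ x in Ioi (0:ℝ), ΦH x y with hH
  -- lintegral versions of the normalizations
  have nonnegf : ∀ᵐ x ∂(volume.restrict (Ioi (0:ℝ))), 0 ≤ x ^ (p * (1 - σ) - 1) * f x ^ p := by
    filter_upwards [ae_restrict_mem measurableSet_Ioi] with x hx
    exact mul_nonneg (Real.rpow_nonneg (le_of_lt hx) _) (Real.rpow_nonneg (hf0 x) _)
  have nonnegg : ∀ᵐ y ∂(volume.restrict (Ioi (0:ℝ))), 0 ≤ y ^ (q * (1 + σ) - 1) * g y ^ q := by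
    filter_upwards [ae_restrict_mem measurableSet_Ioi] with y hy
    exact mul_nonneg (Real.rpow_nonneg (le_of_lt hy) _) (Real.rpow_nonneg (hg0 y) _)
  have lA : ∫⁻ x in Ioi (0:ℝ), ENNReal.ofReal (x ^ (p * (1 - σ) - 1) * f x ^ p) = 1 := by
    rw [← ofReal_integral_eq_lintegral_ofReal hfi nonnegf, hA, ENNReal.ofReal_one]
  have lB : ∫⁻ y in Ioi (0:ℝ), ENNReal.ofReal (y ^ (q * (1 + σ) - 1) * g y ^ q) = 1 := by
    rw [← ofReal_integral_eq_lintegral_ofReal hgi nonnegg, hB, ENNReal.ofReal_one]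
  -- computation of LQ
  have LQ_eq : LQ = ENNReal.ofReal (Cst σ) := by
    rw [hLQ]
    have inner_eq : ∀ y ∈ Ioi (0:ℝ), ∫⁻ x in Ioi (0:ℝ), ΦQ x y
        = ENNReal.ofReal (y ^ (q * (1 + σ) - 1) * g y ^ q) * ENNReal.ofReal (Cst σ) := by
      intro y hy
      have hy' : (0:ℝ) < y := hy
      have step : ∀ x ∈ Ioi (0:ℝ), ΦQ x y
          = ENNReal.ofReal (y ^ (q*(1+σ)/p) * g y ^ q) * ENNReal.ofReal (K (x/y) * x ^ (σ-1)) := by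
        intro x hx
        have hx' : (0:ℝ) < x := hx
        rw [hΦQ]
        simp only
        rw [pGq x y hx' hy', ENNReal.ofReal_mul
          (mul_nonneg (Real.rpow_nonneg hy'.le _) (Real.rpow_nonneg (hg0 y) _))]
      rw [setLIntegral_congr_fun measurableSet_Ioi
          (by intro x hx; exact step x hx),
        lintegral_const_mul' _ _ ENNReal.ofReal_ne_top, lintV hσ hy', ← mul_assoc,
        ← ENNReal.ofReal_mul (mul_nonneg (Real.rpow_nonneg hy'.le _) (Real.rpow_nonneg (hg0 y) _))]
      congr 2
      have hyexp : y ^ (q*(1+σ)/p) * y ^ σ = y ^ (q * (1 + σ) - 1) := by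
        rw [← Real.rpow_add hy']
        congr 1
        field_simp
        linear_combination (-σ-1) * conj.mul_eq_add
      calc y ^ (q*(1+σ)/p) * g y ^ q * y ^ σ
          = (y ^ (q*(1+σ)/p) * y ^ σ) * g y ^ q := by ring
        _ = y ^ (q * (1 + σ) - 1) * g y ^ q := by rw [hyexp]
    rw [setLIntegral_congr_fun measurableSet_Ioi
        (by intro y hy; exact inner_eq y hy),
      lintegral_mul_const' _ _ ENNReal.ofReal_ne_top, lB, one_mul]
  -- computation of LP (needs Tonelli swap)
  have LP_eq : LP = ENNReal.ofReal (Cst σ) := by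
    rw [hLP]
    have swap : ∫⁻ y in Ioi (0:ℝ), ∫⁻ x in Ioi (0:ℝ), ΦP x y
        = ∫⁻ x in Ioi (0:ℝ), ∫⁻ y in Ioi (0:ℝ), ΦP x y := by
      exact lintegral_lintegral_swap
        (((mFp2.comp measurable_swap).ennreal_ofReal).aemeasurable)
    rw [swap]
    have hexp : p*(1-σ)/q + -σ = p*(1-σ)-1 := by
      field_simp
      linear_combination (σ-1) * conj.mul_eq_add
    have inner_eq : ∀ x ∈ Ioi (0:ℝ), ∫⁻ y in Ioi (0:ℝ), ΦP x y
        = ENNReal.ofReal (x ^ (p * (1 - σ) - 1) * f x ^ p) * ENNReal.ofReal (Cst σ) := by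
      intro x hx
      have hx' : (0:ℝ) < x := hx
      have step : ∀ y ∈ Ioi (0:ℝ), ΦP x y
          = ENNReal.ofReal (x ^ (p*(1-σ)/q) * f x ^ p) * ENNReal.ofReal (K (x/y) * y ^ (-σ-1)) := by
        intro y hy
        have hy' : (0:ℝ) < y := hy
        rw [hΦP]
        simp only
        rw [pFp x y hx' hy', ENNReal.ofReal_mul
          (mul_nonneg (Real.rpow_nonneg hx'.le _) (Real.rpow_nonneg (hf0 x) _))]
      rw [setLIntegral_congr_fun measurableSet_Ioi
          (by intro y hy; exact step y hy),
        lintegral_const_mul' _ _ ENNReal.ofReal_ne_top, lintW hσ hx', ← mul_assoc,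
        ← ENNReal.ofReal_mul (mul_nonneg (Real.rpow_nonneg hx'.le _) (Real.rpow_nonneg (hf0 x) _))]
      congr 2
      have hxexp : x ^ (p*(1-σ)/q) * x ^ (-σ) = x ^ (p * (1 - σ) - 1) := by
        rw [← Real.rpow_add hx', hexp]
      calc x ^ (p*(1-σ)/q) * f x ^ p * x ^ (-σ)
          = (x ^ (p*(1-σ)/q) * x ^ (-σ)) * f x ^ p := by ring
        _ = x ^ (p * (1 - σ) - 1) * f x ^ p := by rw [hxexp]
    rw [setLIntegral_congr_fun measurableSet_Ioi
        (by intro x hx; exact inner_eq x hx),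
      lintegral_mul_const' _ _ ENNReal.ofReal_ne_top, lA, one_mul]
  -- pointwise Young decomposition
  have pointwise : ∀ x y, 0 < x → 0 < y →
      Φ x y + ΦH x y = ENNReal.ofReal (1/p) * ΦP x y + ENNReal.ofReal (1/q) * ΦQ x y := by
    intro x y hx hy
    have hFG := pFG x y hx hy
    have young := Real.young_inequality_of_nonneg (hF0 x y hx hy) (hG0 x y hx hy) conj
    have hFGnn : 0 ≤ F x y * G x y := mul_nonneg (hF0 x y hx hy) (hG0 x y hx hy)
    have hFpnn : 0 ≤ F x y ^ p / p := div_nonneg (Real.rpow_nonneg (hF0 x y hx hy) _) hp0.le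
    have hGqnn : 0 ≤ G x y ^ q / q := div_nonneg (Real.rpow_nonneg (hG0 x y hx hy) _) hq0.le
    rw [hΦ, hΦH, hΦP, hΦQ]
    simp only
    rw [← hFG, ← ENNReal.ofReal_add hFGnn (by linarith),
      show F x y * G x y + (F x y ^ p / p + G x y ^ q / q - F x y * G x y)
        = F x y ^ p / p + G x y ^ q / q by ring,
      ENNReal.ofReal_add hFpnn hGqnn,
      show F x y ^ p / p = 1/p * F x y ^ p by ring,
      show G x y ^ q / q = 1/q * G x y ^ q by ring,
      ENNReal.ofReal_mul (by positivity : (0:ℝ) ≤ 1/p),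
      ENNReal.ofReal_mul (by positivity : (0:ℝ) ≤ 1/q)]
  -- sectionwise measurability
  have mΦsec : ∀ y, Measurable fun x => Φ x y := fun y =>
    (mProd.comp (measurable_id.prodMk measurable_const)).ennreal_ofReal
  have mΦHsec : ∀ y, Measurable fun x => ΦH x y := fun y =>
    (mH2.comp (measurable_id.prodMk measurable_const)).ennreal_ofReal
  have mΦPsec : ∀ y, Measurable fun x => ΦP x y := fun y =>
    (mFp2.comp (measurable_id.prodMk measurable_const)).ennreal_ofReal
  have mΦQsec : ∀ y, Measurable fun x => ΦQ x y := fun y =>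
    (mGq2.comp (measurable_id.prodMk measurable_const)).ennreal_ofReal
  have mΦint : Measurable fun y => ∫⁻ x in Ioi (0:ℝ), Φ x y :=
    Measurable.lintegral_prod_right' ((mProd.comp measurable_swap).ennreal_ofReal)
  have mΦHint : Measurable fun y => ∫⁻ x in Ioi (0:ℝ), ΦH x y :=
    Measurable.lintegral_prod_right' ((mH2.comp measurable_swap).ennreal_ofReal)
  have mΦPint : Measurable fun y => ∫⁻ x in Ioi (0:ℝ), ΦP x y :=
    Measurable.lintegral_prod_right' ((mFp2.comp measurable_swap).ennreal_ofReal)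
  -- the decomposition integrated
  have EqC : L + H = ENNReal.ofReal (Cst σ) := by
    have inner : ∀ y ∈ Ioi (0:ℝ),
        (∫⁻ x in Ioi (0:ℝ), Φ x y) + (∫⁻ x in Ioi (0:ℝ), ΦH x y)
        = ENNReal.ofReal (1/p) * (∫⁻ x in Ioi (0:ℝ), ΦP x y)
          + ENNReal.ofReal (1/q) * (∫⁻ x in Ioi (0:ℝ), ΦQ x y) := by
      intro y hy
      have hy' : (0:ℝ) < y := hy
      rw [← lintegral_add_left (mΦsec y),
        ← lintegral_const_mul' _ _ ENNReal.ofReal_ne_top,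
        ← lintegral_const_mul' _ _ ENNReal.ofReal_ne_top,
        ← lintegral_add_left ((mΦPsec y).const_mul _)]
      refine setLIntegral_congr_fun measurableSet_Ioi ?_
      intro x hx
      exact pointwise x y hx hy'
    have outer : (∫⁻ y in Ioi (0:ℝ), ((∫⁻ x in Ioi (0:ℝ), Φ x y) + ∫⁻ x in Ioi (0:ℝ), ΦH x y))
        = ∫⁻ y in Ioi (0:ℝ), (ENNReal.ofReal (1/p) * (∫⁻ x in Ioi (0:ℝ), ΦP x y)
          + ENNReal.ofReal (1/q) * (∫⁻ x in Ioi (0:ℝ), ΦQ x y)) :=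
      setLIntegral_congr_fun measurableSet_Ioi
        (by intro y hy; exact inner y hy)
    rw [hL, hH, ← lintegral_add_left mΦint, outer,
      lintegral_add_left (mΦPint.const_mul _),
      lintegral_const_mul' _ _ ENNReal.ofReal_ne_top,
      lintegral_const_mul' _ _ ENNReal.ofReal_ne_top,
      ← hLP, ← hLQ, LP_eq, LQ_eq, ← add_mul,
      ← ENNReal.ofReal_add (by positivity : (0:ℝ) ≤ 1/p) (by positivity : (0:ℝ) ≤ 1/q),
      hpq, ENNReal.ofReal_one, one_mul]
  -- strictness : H ≠ 0
  have Hne : H ≠ 0 := by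
    intro H0
    rw [hH, lintegral_eq_zero_iff mΦHint] at H0
    have hμ : volume.restrict (Ioi (0:ℝ)) ≠ 0 := by
      intro hcon
      have := congrArg (fun m : Measure ℝ => m (Ioi 0)) hcon
      simp only [Measure.restrict_apply_self, Measure.coe_zero, Pi.zero_apply] at this
      rw [Real.volume_Ioi] at this
      exact ENNReal.top_ne_zero this
    haveI : (ae (volume.restrict (Ioi (0:ℝ)))).NeBot := ae_neBot.mpr hμ
    obtain ⟨y₀, hy₀mem, hy₀⟩ := ((ae_restrict_mem measurableSet_Ioi).and H0).exists
    have hy0' : (0:ℝ) < y₀ := hy₀mem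
    simp only [Pi.zero_apply] at hy₀
    rw [lintegral_eq_zero_iff (mΦHsec y₀)] at hy₀
    set c : ℝ := y₀ ^ (q*(1+σ)/p) * g y₀ ^ q * y₀ ^ (σ+1) with hc
    have hc0 : 0 ≤ c := mul_nonneg (mul_nonneg (Real.rpow_nonneg hy0'.le _)
      (Real.rpow_nonneg (hg0 y₀) _)) (Real.rpow_nonneg hy0'.le _)
    have hexp2 : (p*(1-σ)-1 - p*(1-σ)/q) + (σ-1) = -1 := by
      field_simp
      linear_combination (1-σ) * conj.mul_eq_add
    have hae : ∀ᵐ x ∂(volume.restrict (Ioi (0:ℝ))),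
        x ^ (p * (1 - σ) - 1) * f x ^ p = c * x⁻¹ := by
      filter_upwards [ae_restrict_mem measurableSet_Ioi, hy₀] with x hx hx0
      have hx' : (0:ℝ) < x := hx
      simp only [Pi.zero_apply] at hx0
      rw [hΦH] at hx0
      simp only at hx0
      have h1 : F x y₀ ^ p / p + G x y₀ ^ q / q - F x y₀ * G x y₀ ≤ 0 :=
        ENNReal.ofReal_eq_zero.mp hx0
      have h2 := Real.young_inequality_of_nonneg (hF0 x y₀ hx' hy0') (hG0 x y₀ hx' hy0') conj
      have heq : F x y₀ * G x y₀ = F x y₀ ^ p / p + G x y₀ ^ q / q := le_antisymm h2 (by linarith)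
      have hpow := young_strict conj (hF0 x y₀ hx' hy0') (hG0 x y₀ hx' hy0') heq
      rw [pFp x y₀ hx' hy0', pGq x y₀ hx' hy0'] at hpow
      have hK := K_pos (div_pos hx' hy0')
      have h3 : x ^ (p*(1-σ)/q) * f x ^ p * y₀ ^ (-σ-1)
          = y₀ ^ (q*(1+σ)/p) * g y₀ ^ q * x ^ (σ-1) := by
        have h3' : K (x/y₀) * (x ^ (p*(1-σ)/q) * f x ^ p * y₀ ^ (-σ-1))
            = K (x/y₀) * (y₀ ^ (q*(1+σ)/p) * g y₀ ^ q * x ^ (σ-1)) := by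
          linear_combination hpow
        exact mul_left_cancel₀ hK.ne' h3'
      have hy1 : y₀ ^ (-σ-1) * y₀ ^ (σ+1) = 1 := by
        rw [← Real.rpow_add hy0', show (-σ-1)+(σ+1) = (0:ℝ) by ring, Real.rpow_zero]
      have h4 : x ^ (p*(1-σ)/q) * f x ^ p = c * x ^ (σ-1) := by
        calc x ^ (p*(1-σ)/q) * f x ^ p
            = (x ^ (p*(1-σ)/q) * f x ^ p * y₀ ^ (-σ-1)) * y₀ ^ (σ+1) := by
              rw [mul_assoc (x ^ (p*(1-σ)/q) * f x ^ p), hy1, mul_one]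
          _ = (y₀ ^ (q*(1+σ)/p) * g y₀ ^ q * x ^ (σ-1)) * y₀ ^ (σ+1) := by rw [h3]
          _ = c * x ^ (σ-1) := by rw [hc]; ring
      have hsplit : x ^ (p*(1-σ)-1) = x ^ (p*(1-σ)-1 - p*(1-σ)/q) * x ^ (p*(1-σ)/q) := by
        rw [← Real.rpow_add hx', sub_add_cancel]
      calc x ^ (p * (1 - σ) - 1) * f x ^ p
          = x ^ (p*(1-σ)-1 - p*(1-σ)/q) * (x ^ (p*(1-σ)/q) * f x ^ p) := by
            rw [show p * (1 - σ) - 1 = p*(1-σ)-1 by ring, hsplit]; ring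
        _ = x ^ (p*(1-σ)-1 - p*(1-σ)/q) * (c * x ^ (σ-1)) := by rw [h4]
        _ = c * (x ^ (p*(1-σ)-1 - p*(1-σ)/q) * x ^ (σ-1)) := by ring
        _ = c * x⁻¹ := by
            rw [← Real.rpow_add hx', hexp2, Real.rpow_neg_one]
    rcases eq_or_lt_of_le hc0 with hczero | hcpos
    · have : (1:ℝ) = 0 := by
        rw [← hA, integral_congr_ae hae, ← hczero]
        simp
      norm_num at this
    · have I1 : IntegrableOn (fun x => c * x⁻¹) (Ioi 1) :=
        (hfi.mono_set (Ioi_subset_Ioi zero_le_one)).congr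
          (ae_restrict_of_ae_restrict_of_subset (Ioi_subset_Ioi zero_le_one) hae)
      have I2 : IntegrableOn (fun x : ℝ => x⁻¹) (Ioi 1) := by
        have := I1.const_mul c⁻¹
        refine this.congr (Filter.Eventually.of_forall fun x => ?_)
        field_simp
      exact not_IntegrableOn_Ioi_inv I2
  -- finish
  have hLtop : L ≠ ⊤ :=
    ne_top_of_le_ne_top ENNReal.ofReal_ne_top (le_self_add.trans EqC.le)
  have hLlt : L < ENNReal.ofReal (Cst σ) := by
    calc L < L + H := ENNReal.lt_add_right hLtop Hne
      _ = ENNReal.ofReal (Cst σ) := EqC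
  have conv : ∫ y in Ioi (0:ℝ), ∫ x in Ioi (0:ℝ), (cothR (x / y) - 1) * f x * g y
      = L.toReal := by
    have inner : ∀ y ∈ Ioi (0:ℝ), ∫ x in Ioi (0:ℝ), (cothR (x/y) - 1) * f x * g y
        = (∫⁻ x in Ioi (0:ℝ), Φ x y).toReal := by
      intro y hy
      have hy' : (0:ℝ) < y := hy
      rw [integral_eq_lintegral_of_nonneg_ae]
      · rfl
      · filter_upwards [ae_restrict_mem measurableSet_Ioi] with x hx
        have hx' : (0:ℝ) < x := hx
        have := (K_pos (div_pos hx' hy')).le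
        rw [K] at this
        exact mul_nonneg (mul_nonneg this (hf0 x)) (hg0 y)
      · exact ((mProd.comp (measurable_id.prodMk measurable_const))).aestronglyMeasurable
    rw [setIntegral_congr_ae measurableSet_Ioi
      (by filter_upwards with y hy; exact inner y hy)]
    rw [integral_eq_lintegral_of_nonneg_ae
      (by filter_upwards with y; exact ENNReal.toReal_nonneg)
      mΦint.ennreal_toReal.aestronglyMeasurable]
    rw [hL]
    congr 1
    refine lintegral_congr_ae ?_
    have hfin : ∀ᵐ y ∂(volume.restrict (Ioi (0:ℝ))), (∫⁻ x in Ioi (0:ℝ), Φ x y) < ⊤ := by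
      refine ae_lt_top mΦint ?_
      rw [← hL]; exact hLtop
    filter_upwards [hfin] with y hfy
    exact ENNReal.ofReal_toReal hfy.ne
  rw [conv]
  have := (ENNReal.toReal_lt_toReal hLtop ENNReal.ofReal_ne_top).mpr hLlt
  rwa [ENNReal.toReal_ofReal (Cst_pos hσ).le] at this

end Stmt11

open Stmt11

theorem stmt_11 (p q σ : ℝ) (hp : 1 < p) (hpq : 1 / p + 1 / q = 1) (hσ : 1 < σ)
    (f g : ℝ → ℝ) (hf : Measurable f) (hg : Measurable g)
    (hf0 : ∀ x, 0 ≤ f x) (hg0 : ∀ y, 0 ≤ g y)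
    (hfi : IntegrableOn (fun x => x ^ (p * (1 - σ) - 1) * f x ^ p) (Ioi 0) volume)
    (hfpos : 0 < ∫ x in Ioi (0:ℝ), x ^ (p * (1 - σ) - 1) * f x ^ p)
    (hgi : IntegrableOn (fun y => y ^ (q * (1 + σ) - 1) * g y ^ q) (Ioi 0) volume)
    (hgpos : 0 < ∫ y in Ioi (0:ℝ), y ^ (q * (1 + σ) - 1) * g y ^ q) :
    ∫ y in Ioi (0:ℝ), ∫ x in Ioi (0:ℝ), (cothR (x / y) - 1) * f x * g y <
      (Real.Gamma σ / 2 ^ (σ - 1)) * zetaR σ *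
        ((∫ x in Ioi (0:ℝ), x ^ (p * (1 - σ) - 1) * f x ^ p) ^ (1 / p) *
          (∫ y in Ioi (0:ℝ), y ^ (q * (1 + σ) - 1) * g y ^ q) ^ (1 / q)) := by
  have hp0 : (0:ℝ) < p := lt_trans zero_lt_one hp
  have hq : 1 < q := (Real.HolderConjugate.symm (Real.holderConjugate_iff.mpr ⟨hp, by rw [← one_div, ← one_div]; exact hpq⟩)).lt
  have hq0 : (0:ℝ) < q := lt_trans zero_lt_one hq
  set A := ∫ x in Ioi (0:ℝ), x ^ (p * (1 - σ) - 1) * f x ^ p with hAdef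
  set B := ∫ y in Ioi (0:ℝ), y ^ (q * (1 + σ) - 1) * g y ^ q with hBdef
  set a := A ^ (1/p) with hadef
  set b := B ^ (1/q) with hbdef
  have ha : 0 < a := Real.rpow_pos_of_pos hfpos _
  have hb : 0 < b := Real.rpow_pos_of_pos hgpos _
  have hap : a ^ p = A := by
    rw [hadef, ← Real.rpow_mul hfpos.le, one_div_mul_cancel hp0.ne', Real.rpow_one]
  have hbq : b ^ q = B := by
    rw [hbdef, ← Real.rpow_mul hgpos.le, one_div_mul_cancel hq0.ne', Real.rpow_one]
  -- scaled functions
  have hfscale : ∀ x : ℝ, x ^ (p * (1 - σ) - 1) * (f x / a) ^ p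
      = (x ^ (p * (1 - σ) - 1) * f x ^ p) / a ^ p := by
    intro x
    rw [Real.div_rpow (hf0 x) ha.le]
    ring
  have hgscale : ∀ y : ℝ, y ^ (q * (1 + σ) - 1) * (g y / b) ^ q
      = (y ^ (q * (1 + σ) - 1) * g y ^ q) / b ^ q := by
    intro y
    rw [Real.div_rpow (hg0 y) hb.le]
    ring
  have hfi' : IntegrableOn (fun x => x ^ (p * (1 - σ) - 1) * (f x / a) ^ p) (Ioi 0) volume := by
    exact (hfi.div_const (a ^ p)).congr (Filter.Eventually.of_forall fun x => (hfscale x).symm)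
  have hgi' : IntegrableOn (fun y => y ^ (q * (1 + σ) - 1) * (g y / b) ^ q) (Ioi 0) volume := by
    exact (hgi.div_const (b ^ q)).congr (Filter.Eventually.of_forall fun y => (hgscale y).symm)
  have hA' : ∫ x in Ioi (0:ℝ), x ^ (p * (1 - σ) - 1) * (f x / a) ^ p = 1 := by
    rw [setIntegral_congr_fun measurableSet_Ioi (fun x _ => hfscale x), integral_div,
      ← hAdef, hap, div_self hfpos.ne']
  have hB' : ∫ y in Ioi (0:ℝ), y ^ (q * (1 + σ) - 1) * (g y / b) ^ q = 1 := by
    rw [setIntegral_congr_fun measurableSet_Ioi (fun y _ => hgscale y), integral_div,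
      ← hBdef, hbq, div_self hgpos.ne']
  have keyres := key p q σ hp hpq hσ (fun x => f x / a) (fun y => g y / b)
    (hf.div_const a) (hg.div_const b) (fun x => div_nonneg (hf0 x) ha.le)
    (fun y => div_nonneg (hg0 y) hb.le) hfi' hgi' hA' hB'
  have inner_scale : ∀ y : ℝ, ∫ x in Ioi (0:ℝ), (cothR (x/y) - 1) * (f x / a) * (g y / b)
      = (a*b)⁻¹ * ∫ x in Ioi (0:ℝ), (cothR (x/y) - 1) * f x * g y := by
    intro y
    rw [← integral_const_mul]
    refine setIntegral_congr_fun measurableSet_Ioi (fun x _ => ?_)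
    field_simp
  have outer_scale : ∫ y in Ioi (0:ℝ), ∫ x in Ioi (0:ℝ), (cothR (x/y) - 1) * (f x / a) * (g y / b)
      = (a*b)⁻¹ * ∫ y in Ioi (0:ℝ), ∫ x in Ioi (0:ℝ), (cothR (x/y) - 1) * f x * g y := by
    rw [← integral_const_mul]
    refine setIntegral_congr_fun measurableSet_Ioi (fun y _ => ?_)
    exact inner_scale y
  rw [outer_scale] at keyres
  have hab : 0 < a * b := mul_pos ha hb
  have := mul_lt_mul_of_pos_left keyres hab
  rw [← mul_assoc, mul_inv_cancel₀ hab.ne', one_mul] at this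
  calc ∫ y in Ioi (0:ℝ), ∫ x in Ioi (0:ℝ), (cothR (x / y) - 1) * f x * g y
      < a * b * Cst σ := this
    _ = Real.Gamma σ / 2 ^ (σ - 1) * zetaR σ * (a * b) := by rw [Cst]; ring
end
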